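/- arXiv:1412.8207 — 5 statements merged into one kernel-verified Lean document; each statement's English description precedes it below -/
import Mathlib

section
/- Let Γ be a connected graph, let D, E ∈ ℝ^{Vert(Γ)} be zero-sum vectors, and let μ₀ ∈ ℝ_{≥0}^{Ed(Γ)}. Let S ⊆ Ed(Γ) be the set of edges e with μ₀(e) = 0. Then the limit of g(Γ, μ; D, E) as μ → μ₀ through proper resistances μ ∈ ℝ_{>0}^{Ed(Γ)} exists and equals g(Γ/S, μ₀|_{Ed(Γ)∖S}; [D], [E]), the Green's function of the contracted graph Γ/S with the restricted resistance and the pushed-forward vectors [D], [E]. -/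
open Classical
open scoped BigOperators

/-- A graph: a finite set of vertices, a finite set of edges, and a map assigning to
each edge its unordered pair of endpoints (loops and parallel edges allowed). -/
structure ResGraph where
  V : Type
  E : Type
  [fintV : Fintype V]
  [decV : DecidableEq V]
  [fintE : Fintype E]
  [decE : DecidableEq E]
  ends : E → Sym2 V

attribute [instance] ResGraph.fintV ResGraph.decV ResGraph.fintE ResGraph.decE

namespace ResGraph

variable (G : ResGraph)

/-- The Laplacian of the resistive network `(G, μ)` applied to a voltage assignment `v`:
`(L v) i = Σ_j Σ_{edges e : i → j} (v i − v j) / μ e`. -/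
noncomputable def lap (μ : G.E → ℝ) (v : G.V → ℝ) : G.V → ℝ := fun i =>
  ∑ j : G.V, ∑ e : G.E, if G.ends e = s(i, j) then (v i - v j) / μ e else 0

/-- `i` and `j` are joined by an edge belonging to `F`. -/
def Adj (F : Set G.E) (i j : G.V) : Prop := ∃ e ∈ F, G.ends e = s(i, j)

/-- `i` and `j` lie in the same connected component of the subgraph `Γ|_F`
(the subgraph with all vertices of `Γ` and edge set `F`). -/
def Reach (F : Set G.E) (i j : G.V) : Prop := Relation.EqvGen (G.Adj F) i j

/-- The subgraph `Γ|_F` is connected. -/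
def ConnOn (F : Set G.E) : Prop := ∀ i j : G.V, G.Reach F i j

/-- The graph `G` is connected. -/
def Connected : Prop := G.ConnOn Set.univ

/-- The set of connected components of the subgraph `Γ|_F`. -/
def Comp (F : Set G.E) : Type := Quotient (Relation.EqvGen.setoid (G.Adj F))

/-- A walk from `i` to `j`: a finite sequence of vertices together with a choice of an
edge from each vertex to the next. -/
inductive Walk : G.V → G.V → Type
  | nil (i : G.V) : Walk i i
  | cons {i j k : G.V} (e : G.E) (he : G.ends e = s(i, j)) (w : Walk j k) : Walk i k

namespace Walk

variable {G}

/-- The list of vertices visited by a walk, in order (starting vertex first). -/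
def vertices : ∀ {i j : G.V}, G.Walk i j → List G.V
  | _, _, .nil a => [a]
  | _, _, @Walk.cons _ a _ _ _ _ w => a :: vertices w

/-- The list of edges traversed by a walk, in order. -/
def edges : ∀ {i j : G.V}, G.Walk i j → List G.E
  | _, _, .nil _ => []
  | _, _, .cons e _ w => e :: edges w

/-- The list of steps `(source, edge, target)` of a walk. -/
def steps : ∀ {i j : G.V}, G.Walk i j → List (G.V × G.E × G.V)
  | _, _, .nil _ => []
  | _, _, @Walk.cons _ a b _ e _ w => (a, e, b) :: steps w

/-- All edges of the walk lie in the edge set `F`. -/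
def In {i j : G.V} (w : G.Walk i j) (F : Set G.E) : Prop := ∀ e ∈ w.edges, e ∈ F

/-- A path: a walk all of whose vertices are distinct, except possibly the start and the
end vertex (and which does not traverse any edge twice). -/
def IsPath {i j : G.V} (w : G.Walk i j) : Prop :=
  w.vertices.dropLast.Nodup ∧ w.vertices.tail.Nodup ∧ w.edges.Nodup

/-- Change the (definitionally equal) endpoints of a walk. -/
def copy : ∀ {i j i' j' : G.V}, G.Walk i j → i = i' → j = j' → G.Walk i' j'
  | _, _, _, _, w, rfl, rfl => w

variable (G)

end Walk

/-- `F` is cycle-free: the subgraph `Γ|_F` contains no cycle, i.e. every closed path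
with edges in `F` is trivial. -/
def CycleFree (F : Set G.E) : Prop :=
  ∀ (i : G.V) (w : G.Walk i i), w.In F → w.IsPath → w.edges = []

/-- `T` is a spanning tree of `G`: the subgraph `Γ|_T` is connected and cycle-free. -/
def IsSpanningTree (T : Set G.E) : Prop := G.ConnOn T ∧ G.CycleFree T

/-- `F` is a 2-forest: `Γ|_F` is cycle-free with exactly two connected components. -/
def IsTwoForest (F : Set G.E) : Prop := G.CycleFree F ∧ Nat.card (G.Comp F) = 2

/-- `M` is a maximal forest of the subgraph `Γ|_S`: it is a cycle-free subset of `S`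
containing a spanning tree of each connected component of `Γ|_S` (equivalently,
inducing the same connected components as `S`). -/
def IsMaxForestOf (M S : Set G.E) : Prop :=
  M ⊆ S ∧ G.CycleFree M ∧ ∀ i j : G.V, G.Reach S i j ↔ G.Reach M i j

/-- The sign `σ(i,j;k,ℓ;F)` attached to a 2-forest `F`: `+1` if one component of `Γ|_F`
contains `i` and `k` and the other contains `j` and `ℓ`; `-1` if one component contains
`i` and `ℓ` and the other contains `j` and `k`; `0` otherwise. -/
noncomputable def sigma2 (F : Set G.E) (i j k l : G.V) : ℝ :=
  if ¬ G.Reach F i j ∧ G.Reach F i k ∧ G.Reach F j l then 1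
  else if ¬ G.Reach F i j ∧ G.Reach F i l ∧ G.Reach F j k then -1
  else 0

end ResGraph

namespace ResGraph

variable (G : ResGraph)

/-- An oriented edge: an edge together with an ordering of its endpoints. -/
def OEdge : Type := {x : G.E × G.V × G.V // G.ends x.1 = s(x.2.1, x.2.2)}

noncomputable instance : Fintype G.OEdge := Subtype.fintype _

namespace OEdge

variable {G}

/-- The underlying edge of an oriented edge. -/
def edge (o : G.OEdge) : G.E := o.1.1

/-- The source of an oriented edge. -/
def src (o : G.OEdge) : G.V := o.1.2.1

/-- The target of an oriented edge. -/
def tgt (o : G.OEdge) : G.V := o.1.2.2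

/-- The reversal of an oriented edge. -/
def rev (o : G.OEdge) : G.OEdge := ⟨(o.1.1, o.1.2.2, o.1.2.1), o.2.trans Sym2.eq_swap⟩

end OEdge

/-- An edge current assignment: a real-valued function on oriented edges with
`I(e : i → j) = −I(e : j → i)`. -/
def IsCurrent (I : G.OEdge → ℝ) : Prop := ∀ o : G.OEdge, I o.rev = - I o

/-- The edge current assignment `I` is consistent with the vertex current assignment `D`:
for every vertex `i`, `Σ_j Σ_{edges e : i → j} I(e : i → j) = D i`. -/
def Consistent (I : G.OEdge → ℝ) (D : G.V → ℝ) : Prop :=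
  ∀ x : G.V, (∑ o ∈ Finset.univ.filter (fun o : G.OEdge => o.src = x), I o) = D x

lemma exists_oedge (e : G.E) : ∃ o : G.OEdge, o.edge = e := by
  have h : ∀ z : Sym2 G.V, G.ends e = z → ∃ o : G.OEdge, o.edge = e := by
    refine Sym2.ind (fun a b h => ?_)
    exact ⟨⟨(e, a, b), h⟩, rfl⟩
  exact h (G.ends e) rfl

/-- A choice of orientation for each edge. -/
noncomputable def orient (e : G.E) : G.OEdge := Classical.choose (G.exists_oedge e)

lemma orient_edge (e : G.E) : (G.orient e).edge = e := Classical.choose_spec (G.exists_oedge e)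

/-- The power dissipated by an edge current assignment: `Σ_{e ∈ Ed(Γ)} μ(e) I(e)²`. -/
noncomputable def power (μ : G.E → ℝ) (I : G.OEdge → ℝ) : ℝ :=
  ∑ e : G.E, μ e * (I (G.orient e)) ^ 2

/-- The Green's function `g(Γ, μ; D, E) = Dᵀ v` for any `v` with `L v = E`
(for `Γ` connected, `μ` proper, and `D`, `E` zero-sum vectors, such a `v` exists and
`Dᵀ v` does not depend on the choice). -/
noncomputable def green (μ : G.E → ℝ) (D E : G.V → ℝ) : ℝ :=
  if h : ∃ v : G.V → ℝ, G.lap μ v = E then ∑ x : G.V, D x * Classical.choose h x else 0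

/-- The contracted graph `Γ/S`: identify the two endpoints of each edge in `S` and
delete the edges in `S`. -/
noncomputable def contract (S : Set G.E) : ResGraph :=
  letI : DecidableEq (Quotient (Relation.EqvGen.setoid (G.Adj S))) := Classical.decEq _
  letI : DecidablePred (· ∈ S) := Classical.decPred _
  { V := Quotient (Relation.EqvGen.setoid (G.Adj S))
    E := {e : G.E // e ∉ S}
    ends := fun e => (G.ends e.1).map (Quotient.mk (Relation.EqvGen.setoid (G.Adj S))) }

/-- The quotient map `[·] : Vert(Γ) → Vert(Γ/S)`. -/
noncomputable def cmk (S : Set G.E) (x : G.V) : (G.contract S).V :=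
  Quotient.mk (Relation.EqvGen.setoid (G.Adj S)) x

/-- The edge of `Γ` underlying an edge of `Γ/S` (recall `Ed(Γ/S) = Ed(Γ)∖S`). -/
noncomputable def cval (S : Set G.E) (e : (G.contract S).E) : G.E := e.1

/-- The subset of `Ed(Γ/S) = Ed(Γ)∖S` induced by a subset `F ⊆ Ed(Γ)`, namely `F∖S`. -/
noncomputable def cset (S : Set G.E) (F : Set G.E) : Set (G.contract S).E :=
  {e : (G.contract S).E | G.cval S e ∈ F}

/-- The linear map `[·] : ℝ^{Vert(Γ)} → ℝ^{Vert(Γ/S)}` sending the basis vector `e_i`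
to `e_{[i]}`. -/
noncomputable def pushVec (S : Set G.E) (D : G.V → ℝ) : (G.contract S).V → ℝ := fun x =>
  ∑ i ∈ Finset.univ.filter (fun i : G.V => G.cmk S i = x), D i

/-- Contraction of walks: delete from a walk in `Γ` the edges belonging to `S`,
obtaining a walk in `Γ/S`. -/
noncomputable def contractWalk (S : Set G.E) :
    ∀ {i j : G.V}, G.Walk i j → (G.contract S).Walk (G.cmk S i) (G.cmk S j)
  | _, _, .nil a => .nil (G.cmk S a)
  | _, _, @Walk.cons _ a b _ e he w =>
    if hS : e ∈ S then
      (contractWalk S w).copy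
        (Quotient.sound (Relation.EqvGen.rel b a ⟨e, hS, he.trans Sym2.eq_swap⟩)) rfl
    else
      Walk.cons (j := G.cmk S b) ⟨e, hS⟩
        (by show Sym2.map _ (G.ends e) = s(G.cmk S a, G.cmk S b)
            rw [he]
            exact Sym2.map_pair_eq _ a b) (contractWalk S w)

/-- The current `I_{Γ|_T}(e : i → j)` flowing along the oriented edge `e : i → j` when a
unit current from `k` to `ℓ` is imposed on the spanning tree `Γ|_T`: it is `+1` if `e ∈ T`
and the unique path in `Γ|_T` from `k` to `ℓ` traverses `e` from `i` to `j`, `−1` if it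
traverses `e` from `j` to `i`, and `0` otherwise. -/
noncomputable def treeCurrent (T : Set G.E) (k l : G.V) (e : G.E) (i j : G.V) : ℝ :=
  if e ∈ T ∧ ∃ w : G.Walk k l, w.IsPath ∧ w.In T ∧ (i, e, j) ∈ w.steps then 1
  else if e ∈ T ∧ ∃ w : G.Walk k l, w.IsPath ∧ w.In T ∧ (j, e, i) ∈ w.steps then -1
  else 0

/-- The extended Green's function on possibly improper resistances: contract the edges of
zero resistance and take the Green's function of the resulting proper network, with the
pushed-forward vertex vectors. -/
noncomputable def egreen (μ : G.E → ℝ) (D E : G.V → ℝ) : ℝ :=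
  (G.contract {e : G.E | μ e = 0}).green (fun e => μ (G.cval {e : G.E | μ e = 0} e))
    (G.pushVec {e : G.E | μ e = 0} D) (G.pushVec {e : G.E | μ e = 0} E)

end ResGraph


namespace ResGraph

variable {G : ResGraph}

/-- Potential difference across (the chosen orientation of) an edge. -/
noncomputable def pd (G : ResGraph) (v : G.V → ℝ) (e : G.E) : ℝ :=
  v (G.orient e).src - v (G.orient e).tgt

lemma ends_orient (G : ResGraph) (e : G.E) :
    G.ends e = s((G.orient e).src, (G.orient e).tgt) := by
  conv_lhs => rw [← G.orient_edge e]
  exact (G.orient e).2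

lemma oi_aux {V : Type} {a b a' b' : V} (h : s(a, b) = s(a', b')) (z u : V → ℝ) (m : ℝ) :
    (z a - z b) * ((u a - u b) / m) = (z a' - z b') * ((u a' - u b') / m) := by
  rcases Sym2.eq_iff.mp h with ⟨rfl, rfl⟩ | ⟨rfl, rfl⟩
  · rfl
  · have : u b - u a = -(u a - u b) := by ring
    rw [this, neg_div, mul_neg, ← neg_mul, neg_sub]

lemma green_identity (G : ResGraph) (μ : G.E → ℝ) (z v : G.V → ℝ) :
    ∑ i, z i * G.lap μ v i = ∑ e, G.pd z e * (G.pd v e / μ e) := by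
  have key : ∀ e : G.E,
      (∑ i : G.V, ∑ j : G.V, if G.ends e = s(i, j) then z i * ((v i - v j) / μ e) else 0)
        = G.pd z e * (G.pd v e / μ e) := by
    intro e
    have he : G.ends e = s((G.orient e).src, (G.orient e).tgt) := G.ends_orient e
    set a := (G.orient e).src with ha
    set b := (G.orient e).tgt with hb
    rw [← Finset.sum_product']
    by_cases hab : a = b
    · rw [Finset.sum_eq_zero]
      · have : G.pd v e = 0 := by rw [pd, ← ha, ← hb, hab, sub_self]
        rw [this, zero_div, mul_zero]
      · rintro ⟨i, j⟩ -
        simp only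
        split_ifs with h
        · rw [he, hab] at h
          rcases Sym2.eq_iff.mp h with ⟨rfl, rfl⟩ | ⟨rfl, rfl⟩ <;> simp
        · rfl
    · have hne : ((a, b) : G.V × G.V) ≠ (b, a) := by
        intro h
        rw [Prod.mk.injEq] at h
        exact hab h.1
      have h1 : ({(a, b), (b, a)} : Finset (G.V × G.V)) ⊆ Finset.univ ×ˢ Finset.univ := by
        intro p _
        simp [Finset.mem_product]
      have h2 : ∀ p ∈ Finset.univ ×ˢ Finset.univ,
          p ∉ ({(a, b), (b, a)} : Finset (G.V × G.V)) →
          (if G.ends e = s(p.1, p.2) then z p.1 * ((v p.1 - v p.2) / μ e) else 0) = 0 := by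
        rintro ⟨i, j⟩ - hp
        simp only
        rw [if_neg]
        intro h
        rw [he] at h
        apply hp
        rcases Sym2.eq_iff.mp h with ⟨rfl, rfl⟩ | ⟨rfl, rfl⟩ <;> simp
      rw [← Finset.sum_subset h1 h2,
        Finset.sum_insert (by simp only [Finset.mem_singleton]; exact hne),
        Finset.sum_singleton, if_pos he, if_pos (he.trans Sym2.eq_swap), pd, pd, ← ha, ← hb,
        show v b - v a = -(v a - v b) by ring, neg_div, mul_neg]
      ring
  calc ∑ i, z i * G.lap μ v i
      = ∑ i : G.V, ∑ j : G.V, ∑ e : G.E,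
          if G.ends e = s(i, j) then z i * ((v i - v j) / μ e) else 0 := by
        unfold lap
        simp only [Finset.mul_sum, mul_ite, mul_zero]
    _ = ∑ i : G.V, ∑ e : G.E, ∑ j : G.V,
          if G.ends e = s(i, j) then z i * ((v i - v j) / μ e) else 0 :=
        Finset.sum_congr rfl fun i _ => Finset.sum_comm
    _ = ∑ e : G.E, ∑ i : G.V, ∑ j : G.V,
          if G.ends e = s(i, j) then z i * ((v i - v j) / μ e) else 0 := Finset.sum_comm
    _ = _ := Finset.sum_congr rfl fun e _ => key e

/-- The Laplacian as a linear map. -/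
noncomputable def lapL (G : ResGraph) (μ : G.E → ℝ) : (G.V → ℝ) →ₗ[ℝ] (G.V → ℝ) where
  toFun := G.lap μ
  map_add' v w := by
    funext i
    simp only [lap, Pi.add_apply, ← Finset.sum_add_distrib]
    refine Finset.sum_congr rfl fun j _ => Finset.sum_congr rfl fun e _ => ?_
    split_ifs <;> ring
  map_smul' c v := by
    funext i
    simp only [lap, Pi.smul_apply, smul_eq_mul, Finset.mul_sum, RingHom.id_apply]
    refine Finset.sum_congr rfl fun j _ => Finset.sum_congr rfl fun e _ => ?_
    split_ifs <;> ring

@[simp] lemma lapL_apply (G : ResGraph) (μ : G.E → ℝ) (v : G.V → ℝ) :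
    G.lapL μ v = G.lap μ v := rfl

lemma sum_lap (G : ResGraph) (μ : G.E → ℝ) (v : G.V → ℝ) :
    ∑ i, G.lap μ v i = 0 := by
  have h := green_identity G μ (fun _ => 1) v
  simpa [pd] using h

lemma reach_const {F : Set G.E} {v : G.V → ℝ}
    (hv : ∀ e ∈ F, ∀ a b : G.V, G.ends e = s(a, b) → v a = v b) :
    ∀ i j, G.Reach F i j → v i = v j := by
  intro i j h
  induction h with
  | rel a b hab => obtain ⟨e, heF, hends⟩ := hab; exact hv e heF a b hends
  | refl a => rfl
  | symm a b _ ih => exact ih.symm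
  | trans a b c _ _ ih1 ih2 => exact ih1.trans ih2

lemma lap_eq_zero_of_const {μ : G.E → ℝ} {F : Set G.E}
    (hF : ∀ e, μ e ≠ 0 → e ∈ F) {v : G.V → ℝ}
    (hv : ∀ i j, G.Reach F i j → v i = v j) : G.lap μ v = 0 := by
  funext i
  rw [lap]
  rw [Finset.sum_eq_zero]
  · rfl
  intro j _
  rw [Finset.sum_eq_zero]
  intro e _
  split_ifs with h
  · by_cases hμe : μ e = 0
    · rw [hμe, div_zero]
    · have : v i = v j :=
        hv i j (Relation.EqvGen.rel _ _ ⟨e, hF e hμe, h⟩)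
      rw [this, sub_self, zero_div]
  · rfl

lemma const_of_lap_eq_zero {μ : G.E → ℝ} (hμ0 : ∀ e, 0 ≤ μ e) {F : Set G.E}
    (hF : ∀ e ∈ F, μ e ≠ 0) {v : G.V → ℝ}
    (hlv : G.lap μ v = 0) : ∀ i j, G.Reach F i j → v i = v j := by
  have hkey : ∀ e : G.E, G.pd v e * (G.pd v e / μ e) = G.pd v e ^ 2 / μ e := fun e => by
    rw [sq, mul_div_assoc]
  have h0 : ∑ e, G.pd v e ^ 2 / μ e = 0 := by
    have h := green_identity G μ v v
    rw [hlv] at h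
    simp only [Pi.zero_apply, mul_zero, Finset.sum_const_zero] at h
    rw [← Finset.sum_congr rfl fun e _ => hkey e, ← h]
  have hterm : ∀ e : G.E, G.pd v e ^ 2 / μ e = 0 := by
    have := (Finset.sum_eq_zero_iff_of_nonneg
      (fun e _ => div_nonneg (sq_nonneg (G.pd v e)) (hμ0 e))).mp h0
    exact fun e => this e (Finset.mem_univ e)
  have hpd : ∀ e ∈ F, G.pd v e = 0 := by
    intro e heF
    rcases div_eq_zero_iff.mp (hterm e) with h | h
    · exact (pow_eq_zero_iff two_ne_zero).mp h
    · exact absurd h (hF e heF)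
  refine reach_const ?_
  intro e heF a b hends
  have h1 : v (G.orient e).src = v (G.orient e).tgt := sub_eq_zero.mp (hpd e heF)
  have h2 : s(a, b) = s((G.orient e).src, (G.orient e).tgt) :=
    hends.symm.trans (G.ends_orient e)
  rcases Sym2.eq_iff.mp h2 with ⟨ha, hb⟩ | ⟨ha, hb⟩
  · rw [ha, hb, h1]
  · rw [ha, hb, h1]

end ResGraph


namespace ResGraph

variable {G : ResGraph}

/-- `pushVec` as a linear map. -/
noncomputable def pushVecL (G : ResGraph) (F : Set G.E) :
    (G.V → ℝ) →ₗ[ℝ] ((G.contract F).V → ℝ) where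
  toFun := G.pushVec F
  map_add' v w := by
    funext x
    simp [pushVec, Finset.sum_add_distrib]
  map_smul' c v := by
    funext x
    simp [pushVec, Finset.mul_sum]

@[simp] lemma pushVecL_apply (G : ResGraph) (F : Set G.E) (v : G.V → ℝ) :
    G.pushVecL F v = G.pushVec F v := rfl

lemma cmk_eq_of_adj {F : Set G.E} {i j : G.V} (h : G.Adj F i j) : G.cmk F i = G.cmk F j :=
  Quotient.sound (Relation.EqvGen.rel _ _ h)

lemma cmk_eq_of_reach {F : Set G.E} {i j : G.V} (h : G.Reach F i j) : G.cmk F i = G.cmk F j :=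
  Quotient.sound h

lemma sum_push (G : ResGraph) (F : Set G.E) (zb : (G.contract F).V → ℝ) (r : G.V → ℝ) :
    ∑ i, zb (G.cmk F i) * r i = ∑ x, zb x * G.pushVec F r x := by
  unfold pushVec
  rw [eq_comm]
  calc ∑ x, zb x * ∑ i ∈ Finset.univ.filter (fun i : G.V => G.cmk F i = x), r i
      = ∑ x, ∑ i ∈ Finset.univ.filter (fun i : G.V => G.cmk F i = x), zb (G.cmk F i) * r i := by
        refine Finset.sum_congr rfl fun x _ => ?_
        rw [Finset.mul_sum]
        refine Finset.sum_congr rfl fun i hi => ?_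
        rw [(Finset.mem_filter.mp hi).2]
    _ = ∑ i, zb (G.cmk F i) * r i := Finset.sum_fiberwise _ _ _

lemma sum_pushVec (G : ResGraph) (F : Set G.E) (r : G.V → ℝ) :
    ∑ x, G.pushVec F r x = ∑ i, r i := by
  have h := sum_push G F (fun _ => 1) r
  simpa using h.symm

lemma push_lap_eq_zero (G : ResGraph) (F : Set G.E) (θ : G.E → ℝ) (v : G.V → ℝ)
    (hθ : ∀ e, θ e ≠ 0 → e ∈ F) (x : (G.contract F).V) :
    G.pushVec F (G.lap θ v) x = 0 := by
  have h1 : G.pushVec F (G.lap θ v) x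
      = ∑ i, (fun i => if G.cmk F i = x then (1:ℝ) else 0) i * G.lap θ v i := by
    unfold pushVec
    rw [Finset.sum_filter]
    refine Finset.sum_congr rfl fun i _ => ?_
    by_cases h : G.cmk F i = x <;> simp [h]
  rw [h1, green_identity]
  refine Finset.sum_eq_zero fun e _ => ?_
  by_cases hθe : θ e = 0
  · rw [hθe, div_zero, mul_zero]
  · have hc : G.cmk F (G.orient e).src = G.cmk F (G.orient e).tgt :=
      cmk_eq_of_adj ⟨e, hθ e hθe, G.ends_orient e⟩
    simp only [pd, hc, sub_self, zero_mul]

/-- Functions constant on the connected components of `Γ|_F`, as a submodule. -/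
noncomputable def constSub (G : ResGraph) (F : Set G.E) : Submodule ℝ (G.V → ℝ) where
  carrier := {v | ∀ i j, G.Reach F i j → v i = v j}
  add_mem' := fun hv hw i j h => by
    simp only [Pi.add_apply, hv i j h, hw i j h]
  zero_mem' := fun i j h => rfl
  smul_mem' := fun c v hv i j h => by
    simp only [Pi.smul_apply, hv i j h]

noncomputable def constEquiv (G : ResGraph) (F : Set G.E) :
    (constSub G F) ≃ₗ[ℝ] ((G.contract F).V → ℝ) where
  toFun v := fun x => Quotient.liftOn x v.1 (fun a b hab => v.2 a b hab)
  map_add' v w := by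
    funext x
    induction x using Quotient.ind
    rfl
  map_smul' c v := by
    funext x
    induction x using Quotient.ind
    rfl
  invFun f := ⟨fun i => f (G.cmk F i), fun i j h => congrArg f (cmk_eq_of_reach h)⟩
  left_inv v := Subtype.ext (funext fun i => rfl)
  right_inv f := by
    funext x
    induction x using Quotient.ind
    rfl

lemma pushVec_surjective (G : ResGraph) (F : Set G.E) :
    Function.Surjective (G.pushVecL F) := by
  intro f
  refine ⟨fun i => f (G.cmk F i) /
    ((Finset.univ.filter (fun j : G.V => G.cmk F j = G.cmk F i)).card : ℝ), funext fun x => ?_⟩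
  obtain ⟨i0, hi0⟩ := Quotient.exists_rep x
  have hmem : i0 ∈ Finset.univ.filter (fun j : G.V => G.cmk F j = x) :=
    Finset.mem_filter.mpr ⟨Finset.mem_univ _, hi0⟩
  have hcard : ((Finset.univ.filter (fun j : G.V => G.cmk F j = x)).card : ℝ) ≠ 0 := by
    exact_mod_cast Finset.card_ne_zero_of_mem hmem
  have hterm : ∀ i ∈ Finset.univ.filter (fun i : G.V => G.cmk F i = x),
      f (G.cmk F i) / ((Finset.univ.filter (fun j : G.V => G.cmk F j = G.cmk F i)).card : ℝ)
        = f x / ((Finset.univ.filter (fun j : G.V => G.cmk F j = x)).card : ℝ) := by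
    intro i hi
    rw [(Finset.mem_filter.mp hi).2]
  show G.pushVec F _ x = f x
  unfold pushVec
  rw [Finset.sum_congr rfl hterm, Finset.sum_const, nsmul_eq_mul, mul_div_cancel₀ _ hcard]

lemma ker_lapL (G : ResGraph) (μ : G.E → ℝ) (hμ0 : ∀ e, 0 ≤ μ e) (F : Set G.E)
    (hF : ∀ e, μ e ≠ 0 ↔ e ∈ F) :
    LinearMap.ker (G.lapL μ) = constSub G F := by
  ext v
  constructor
  · intro hv
    exact const_of_lap_eq_zero hμ0 (fun e he => (hF e).mpr he) (by simpa using hv)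
  · intro hv
    exact LinearMap.mem_ker.mpr (lap_eq_zero_of_const (fun e he => (hF e).mp he) hv)

lemma range_lapL (G : ResGraph) (μ : G.E → ℝ) (hμ0 : ∀ e, 0 ≤ μ e) (F : Set G.E)
    (hF : ∀ e, μ e ≠ 0 ↔ e ∈ F) :
    LinearMap.range (G.lapL μ) = LinearMap.ker (G.pushVecL F) := by
  have hle : LinearMap.range (G.lapL μ) ≤ LinearMap.ker (G.pushVecL F) := by
    rintro r ⟨v, rfl⟩
    refine LinearMap.mem_ker.mpr (funext fun x => ?_)
    exact push_lap_eq_zero G F μ v (fun e he => (hF e).mp he) x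
  refine Submodule.eq_of_le_of_finrank_le hle ?_
  have e1 : Module.finrank ℝ ↥(LinearMap.range (G.lapL μ))
      + Module.finrank ℝ ↥(LinearMap.ker (G.lapL μ)) = Fintype.card G.V := by
    rw [LinearMap.finrank_range_add_finrank_ker]
    exact Module.finrank_fintype_fun_eq_card ℝ
  have e2 : Module.finrank ℝ ↥(LinearMap.ker (G.lapL μ)) = Fintype.card (G.contract F).V := by
    rw [ker_lapL G μ hμ0 F hF]
    rw [(constEquiv G F).finrank_eq]
    exact Module.finrank_fintype_fun_eq_card ℝ
  have e3 : Module.finrank ℝ ↥(LinearMap.range (G.pushVecL F))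
      + Module.finrank ℝ ↥(LinearMap.ker (G.pushVecL F)) = Fintype.card G.V := by
    rw [LinearMap.finrank_range_add_finrank_ker]
    exact Module.finrank_fintype_fun_eq_card ℝ
  have e4 : Module.finrank ℝ ↥(LinearMap.range (G.pushVecL F))
      = Fintype.card (G.contract F).V := by
    rw [LinearMap.range_eq_top.mpr (pushVec_surjective G F), finrank_top]
    exact Module.finrank_fintype_fun_eq_card ℝ
  omega

lemma exists_lap_eq (G : ResGraph) (μ : G.E → ℝ) (hμ0 : ∀ e, 0 ≤ μ e) (F : Set G.E)
    (hF : ∀ e, μ e ≠ 0 ↔ e ∈ F) (r : G.V → ℝ) (hr : G.pushVec F r = 0) :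
    ∃ v, G.lap μ v = r := by
  have : r ∈ LinearMap.range (G.lapL μ) := by
    rw [range_lapL G μ hμ0 F hF]
    exact LinearMap.mem_ker.mpr hr
  obtain ⟨v, hv⟩ := this
  exact ⟨v, hv⟩

lemma pushVec_univ_eq_sum (hG : G.Connected) (r : G.V → ℝ) (x : (G.contract Set.univ).V) :
    G.pushVec Set.univ r x = ∑ i, r i := by
  unfold pushVec
  rw [Finset.filter_true_of_mem]
  intro i _
  obtain ⟨j, hj⟩ := Quotient.exists_rep x
  rw [← hj]
  exact Quotient.sound (hG i j)

lemma sum_mul_eq_of_lap_eq (hG : G.Connected) {μ : G.E → ℝ} (hμ : ∀ e, 0 < μ e)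
    {D v v' : G.V → ℝ} (hD : ∑ x, D x = 0) (h : G.lap μ v = G.lap μ v') :
    ∑ i, D i * v i = ∑ i, D i * v' i := by
  have hlz : G.lap μ (v - v') = 0 := by
    have : G.lapL μ (v - v') = 0 := by
      rw [map_sub]
      simp only [lapL_apply, h, sub_self]
    simpa using this
  have hker : ∀ i j, G.Reach Set.univ i j → (v - v') i = (v - v') j :=
    const_of_lap_eq_zero (fun e => (hμ e).le) (F := Set.univ) (fun e _ => (hμ e).ne') hlz
  rcases isEmpty_or_nonempty G.V with hVe | hVn
  · rw [Finset.univ_eq_empty]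
    simp
  · obtain ⟨j0⟩ := hVn
    have hconst : ∀ i, v i - v' i = v j0 - v' j0 := by
      intro i
      have := hker i j0 (hG i j0)
      simpa using this
    have h1 : ∑ i, D i * v i - ∑ i, D i * v' i = ∑ i, D i * (v i - v' i) := by
      rw [← Finset.sum_sub_distrib]
      exact Finset.sum_congr rfl fun i _ => by ring
    have h2 : ∑ i, D i * (v i - v' i) = (∑ i, D i) * (v j0 - v' j0) := by
      rw [Finset.sum_mul]
      exact Finset.sum_congr rfl fun i _ => by rw [hconst i]
    rw [hD, zero_mul] at h2
    rw [h2] at h1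
    linarith

end ResGraph


namespace ResGraph

variable {G : ResGraph}

lemma contract_ends (S : Set G.E) (e : (G.contract S).E) :
    (G.contract S).ends e = (G.ends e.1).map (fun i => G.cmk S i) := rfl

lemma contract_connected (hG : G.Connected) (S : Set G.E) : (G.contract S).Connected := by
  intro x y
  obtain ⟨i, rfl⟩ := Quotient.exists_rep x
  obtain ⟨j, rfl⟩ := Quotient.exists_rep y
  have key : ∀ i j : G.V, G.Reach Set.univ i j →
      (G.contract S).Reach Set.univ (G.cmk S i) (G.cmk S j) := by
    intro i j h
    induction h with
    | rel a b hab =>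
      obtain ⟨e, -, hends⟩ := hab
      by_cases hS : e ∈ S
      · have heq : G.cmk S a = G.cmk S b := cmk_eq_of_adj ⟨e, hS, hends⟩
        rw [heq]
        exact Relation.EqvGen.refl _
      · refine Relation.EqvGen.rel _ _ ⟨⟨e, hS⟩, Set.mem_univ _, ?_⟩
        show (G.ends e).map _ = s(G.cmk S a, G.cmk S b)
        rw [hends]
        exact Sym2.map_pair_eq _ a b
    | refl a => exact Relation.EqvGen.refl _
    | symm a b _ ih => exact Relation.EqvGen.symm _ _ ih
    | trans a b c _ _ ih1 ih2 => exact Relation.EqvGen.trans _ _ _ ih1 ih2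
  exact key i j (hG i j)

lemma sum_contractE (S : Set G.E) (f : G.E → ℝ) (hf : ∀ e ∈ S, f e = 0) :
    ∑ eb : (G.contract S).E, f eb.1 = ∑ e, f e := by
  have h1 : ∑ e ∈ Finset.univ.filter (fun e : G.E => e ∉ S), f e
      = ∑ eb : (G.contract S).E, f eb.1 :=
    Finset.sum_subtype _ (by simp) f
  rw [← h1, ← Finset.sum_filter_add_sum_filter_not Finset.univ (fun e : G.E => e ∉ S) f]
  have h2 : ∑ e ∈ Finset.univ.filter (fun e : G.E => ¬ e ∉ S), f e = 0 :=
    Finset.sum_eq_zero fun e he => hf e (not_not.mp (Finset.mem_filter.mp he).2)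
  rw [h2, add_zero]

lemma pushlap (S : Set G.E) (μ : G.E → ℝ) (w zb : (G.contract S).V → ℝ) :
    ∑ i, zb (G.cmk S i) * G.lap μ (fun i => w (G.cmk S i)) i
      = ∑ x, zb x * (G.contract S).lap (fun eb => μ (G.cval S eb)) w x := by
  rw [green_identity, green_identity]
  have hzero : ∀ e ∈ S, G.pd (fun i => zb (G.cmk S i)) e
      * (G.pd (fun i => w (G.cmk S i)) e / μ e) = 0 := by
    intro e heS
    have hc : G.cmk S (G.orient e).src = G.cmk S (G.orient e).tgt :=
      cmk_eq_of_adj ⟨e, heS, G.ends_orient e⟩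
    simp only [pd, hc, sub_self, zero_mul]
  rw [← sum_contractE S _ hzero]
  refine Finset.sum_congr rfl fun eb _ => ?_
  have hends : (G.contract S).ends eb
      = s(G.cmk S (G.orient eb.1).src, G.cmk S (G.orient eb.1).tgt) := by
    rw [contract_ends, G.ends_orient eb.1]
    exact Sym2.map_pair_eq _ _ _
  have h2 : s(((G.contract S).orient eb).src, ((G.contract S).orient eb).tgt)
      = s(G.cmk S (G.orient eb.1).src, G.cmk S (G.orient eb.1).tgt) :=
    (((G.contract S).ends_orient eb).symm).trans hends
  have hoi := oi_aux h2 zb w (μ eb.1)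
  simp only [pd, cval]
  exact hoi.symm

lemma cs_bound (G : ResGraph) {μ : G.E → ℝ} (hμ : ∀ e, 0 < μ e) (c p : G.V → ℝ) (θ : G.E → ℝ) :
    |∑ e, G.pd c e * (G.pd p e / θ e)|
      ≤ Real.sqrt (∑ e, G.pd c e ^ 2 / μ e)
        * Real.sqrt (∑ e, μ e * (G.pd p e / θ e) ^ 2) := by
  set f : G.E → ℝ := fun e => G.pd c e / Real.sqrt (μ e) with hf
  set g : G.E → ℝ := fun e => Real.sqrt (μ e) * (G.pd p e / θ e) with hg
  have key : ∀ e ∈ Finset.univ, G.pd c e * (G.pd p e / θ e) = f e * g e := by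
    intro e _
    have hs : Real.sqrt (μ e) ≠ 0 := ne_of_gt (Real.sqrt_pos.mpr (hμ e))
    rw [hf, hg]
    field_simp
  have hf2 : ∑ e, f e ^ 2 = ∑ e, G.pd c e ^ 2 / μ e := by
    refine Finset.sum_congr rfl fun e _ => ?_
    rw [hf, div_pow, Real.sq_sqrt (hμ e).le]
  have hg2 : ∑ e, g e ^ 2 = ∑ e, μ e * (G.pd p e / θ e) ^ 2 := by
    refine Finset.sum_congr rfl fun e _ => ?_
    rw [hg, mul_pow, Real.sq_sqrt (hμ e).le]
  calc |∑ e, G.pd c e * (G.pd p e / θ e)|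
      = |∑ e, f e * g e| := by rw [Finset.sum_congr rfl key]
    _ = Real.sqrt ((∑ e, f e * g e) ^ 2) := (Real.sqrt_sq_eq_abs _).symm
    _ ≤ Real.sqrt ((∑ e, f e ^ 2) * (∑ e, g e ^ 2)) :=
        Real.sqrt_le_sqrt (Finset.sum_mul_sq_le_sq_mul_sq _ _ _)
    _ = Real.sqrt (∑ e, f e ^ 2) * Real.sqrt (∑ e, g e ^ 2) :=
        Real.sqrt_mul (Finset.sum_nonneg fun e _ => sq_nonneg _) _
    _ = _ := by rw [hf2, hg2]

lemma sqrt_le_of_le_sqrt_mul {q A : ℝ} (hq : 0 ≤ q) (hA : 0 ≤ A)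
    (h : q ≤ Real.sqrt q * A) : Real.sqrt q ≤ A := by
  rcases eq_or_lt_of_le (Real.sqrt_nonneg q) with h0 | h0
  · rw [← h0]
    exact hA
  · have hmu := Real.mul_self_sqrt hq
    nlinarith

end ResGraph


theorem stmt12 (G : ResGraph) (hG : G.Connected) (D E : G.V → ℝ)
    (hD : ∑ x : G.V, D x = 0) (hE : ∑ x : G.V, E x = 0)
    (μ₀ : G.E → ℝ) (hμ₀ : ∀ e : G.E, 0 ≤ μ₀ e) :
    Filter.Tendsto (fun μ : G.E → ℝ => G.green μ D E)
      (nhdsWithin μ₀ {μ : G.E → ℝ | ∀ e : G.E, 0 < μ e})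
      (nhds ((G.contract {e : G.E | μ₀ e = 0}).green
        (fun e => μ₀ (G.cval {e : G.E | μ₀ e = 0} e))
        (G.pushVec {e : G.E | μ₀ e = 0} D) (G.pushVec {e : G.E | μ₀ e = 0} E))) := by
  set S : Set G.E := {e : G.E | μ₀ e = 0} with hS
  set Gb := G.contract S with hGb
  set μb : Gb.E → ℝ := fun e => μ₀ (G.cval S e) with hμb
  have hμbpos : ∀ eb : Gb.E, 0 < μb eb := by
    intro eb
    have h1 : μ₀ eb.1 ≠ 0 := eb.2
    rw [hμb]
    exact lt_of_le_of_ne (hμ₀ _) (Ne.symm h1)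
  have hGbconn : Gb.Connected := ResGraph.contract_connected hG S
  have hEb : ∑ x, G.pushVec S E x = 0 := by rw [ResGraph.sum_pushVec]; exact hE
  have hFb : ∀ eb : Gb.E, μb eb ≠ 0 ↔ eb ∈ (Set.univ : Set Gb.E) :=
    fun eb => ⟨fun _ => Set.mem_univ _, fun _ => (hμbpos eb).ne'⟩
  have hEker : Gb.pushVec Set.univ (G.pushVec S E) = 0 := funext fun x => by
    rw [ResGraph.pushVec_univ_eq_sum hGbconn]; exact hEb
  have hw : ∃ w, Gb.lap μb w = G.pushVec S E :=
    ResGraph.exists_lap_eq Gb μb (fun e => (hμbpos e).le) Set.univ hFb _ hEker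
  set w := Classical.choose hw with hwdef
  have hwspec : Gb.lap μb w = G.pushVec S E := Classical.choose_spec hw
  have hT : Gb.green μb (G.pushVec S D) (G.pushVec S E) = ∑ x, G.pushVec S D x * w x := by
    rw [ResGraph.green, dif_pos hw]
  set u : G.V → ℝ := fun i => w (G.cmk S i) with hu
  have hDu : ∑ i, D i * u i = ∑ x, G.pushVec S D x * w x := by
    calc ∑ i, D i * u i = ∑ i, w (G.cmk S i) * D i :=
          Finset.sum_congr rfl fun i _ => mul_comm _ _
      _ = ∑ x, w x * G.pushVec S D x := ResGraph.sum_push G S w D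
      _ = ∑ x, G.pushVec S D x * w x := Finset.sum_congr rfl fun x _ => mul_comm _ _
  -- the degenerate resistance supported on S
  set ν : G.E → ℝ := fun e => if μ₀ e = 0 then (1:ℝ) else 0 with hν
  have hν0 : ∀ e, 0 ≤ ν e := by
    intro e
    rw [hν]
    dsimp only
    split_ifs <;> norm_num
  have hνF : ∀ e, ν e ≠ 0 ↔ e ∈ S := by
    intro e
    rw [hν]
    dsimp only
    split_ifs with h
    · exact ⟨fun _ => h, fun _ => one_ne_zero⟩
    · exact ⟨fun hc => absurd rfl hc, fun hc => absurd hc h⟩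
  set r₀ : G.V → ℝ := fun i => E i - G.lap μ₀ u i with hr₀def
  -- delta-function summation helper
  have hdelta : ∀ (x : Gb.V) (f : Gb.V → ℝ),
      ∑ y, (if y = x then (1:ℝ) else 0) * f y = f x := by
    intro x f
    rw [Finset.sum_eq_single x]
    · simp
    · intro y _ hy; simp [hy]
    · intro hx; exact absurd (Finset.mem_univ x) hx
  have hpushlap : ∀ x, G.pushVec S (G.lap μ₀ u) x = G.pushVec S E x := by
    intro x
    have h1 := ResGraph.pushlap S μ₀ w (fun y => if y = x then (1:ℝ) else 0)
    have h2 := ResGraph.sum_push G S (fun y => if y = x then (1:ℝ) else 0) (G.lap μ₀ u)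
    rw [hwspec] at h1
    have h3 := h2.symm.trans h1
    rw [hdelta x, hdelta x] at h3
    exact h3
  have hr₀push : G.pushVec S r₀ = 0 := by
    funext x
    have hsub : G.pushVec S r₀ x = G.pushVec S E x - G.pushVec S (G.lap μ₀ u) x := by
      rw [hr₀def]
      unfold ResGraph.pushVec
      rw [Finset.sum_sub_distrib]
    rw [hsub, hpushlap, sub_self]
    exact rfl
  have hp : ∃ p, G.lap ν p = r₀ := ResGraph.exists_lap_eq G ν hν0 S hνF r₀ hr₀push
  set p := Classical.choose hp with hpdef
  have hpspec : G.lap ν p = r₀ := Classical.choose_spec hp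
  set μs : G.E → ℝ := fun e => μ₀ e + 1 with hμs
  have hμspos : ∀ e, 0 < μs e := by
    intro e
    rw [hμs]
    dsimp only
    linarith [hμ₀ e]
  have hμsF : ∀ e, μs e ≠ 0 ↔ e ∈ (Set.univ : Set G.E) :=
    fun e => ⟨fun _ => Set.mem_univ _, fun _ => (hμspos e).ne'⟩
  have hDker : G.pushVec Set.univ D = 0 := funext fun x => by
    rw [ResGraph.pushVec_univ_eq_sum hG]; exact hD
  have hd : ∃ d, G.lap μs d = D :=
    ResGraph.exists_lap_eq G μs (fun e => (hμspos e).le) Set.univ hμsF D hDker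
  set d₀ := Classical.choose hd with hd₀def
  have hdspec : G.lap μs d₀ = D := Classical.choose_spec hd
  -- linear section of the Laplacian at μs
  set Z := LinearMap.range (G.lapL μs) with hZ
  have hLs : LinearMap.range (LinearMap.codRestrict Z (G.lapL μs)
      (fun v => LinearMap.mem_range_self _ v)) = ⊤ := by
    rw [LinearMap.range_eq_top]
    rintro ⟨z, hz⟩
    obtain ⟨v, hv⟩ := hz
    exact ⟨v, Subtype.ext hv⟩
  obtain ⟨σ, hσ⟩ := LinearMap.exists_rightInverse_of_surjective _ hLs
  obtain ⟨q, hq⟩ := Submodule.exists_isCompl Z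
  set sig := σ.comp (Z.linearProjOfIsCompl q hq) with hsig
  have hsigspec : ∀ s, s ∈ Z → G.lap μs (sig s) = s := by
    intro s hs
    have h1 : Z.linearProjOfIsCompl q hq s = ⟨s, hs⟩ :=
      Submodule.linearProjOfIsCompl_apply_left hq ⟨s, hs⟩
    have h2 := congrArg (fun t : Z => (t : G.V → ℝ)) (LinearMap.ext_iff.mp hσ ⟨s, hs⟩)
    simp only [LinearMap.comp_apply, LinearMap.codRestrict_apply, LinearMap.id_apply] at h2
    rw [hsig]
    calc G.lap μs (σ.comp (Z.linearProjOfIsCompl q hq) s)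
        = G.lap μs (σ ⟨s, hs⟩) := by rw [LinearMap.comp_apply, h1]
      _ = s := h2
  -- the error-source family
  set sfun : (G.E → ℝ) → (G.V → ℝ) := fun μ => fun i => G.lap μ₀ u i - G.lap μ u i
    with hsfun
  have hsmem : ∀ μ : G.E → ℝ, sfun μ ∈ Z := by
    intro μ
    rw [hZ, ResGraph.range_lapL G μs (fun e => (hμspos e).le) Set.univ hμsF]
    refine LinearMap.mem_ker.mpr ?_
    have : G.pushVec Set.univ (sfun μ) = 0 := by
      funext x
      have h1 := ResGraph.push_lap_eq_zero G Set.univ μ₀ u (fun e _ => Set.mem_univ e) x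
      have h2 := ResGraph.push_lap_eq_zero G Set.univ μ u (fun e _ => Set.mem_univ e) x
      rw [hsfun]
      unfold ResGraph.pushVec
      rw [Finset.sum_sub_distrib]
      unfold ResGraph.pushVec at h1 h2
      rw [h1, h2, sub_zero]
      exact rfl
    simpa using this
  -- quantitative data
  set C : ℝ := ∑ e, μs e * (G.pd d₀ e / μs e) ^ 2 with hC
  set ε₁ : (G.E → ℝ) → ℝ := fun μ => ∑ e, μ e * (G.pd p e / ν e) ^ 2 with hε₁
  set ε₂ : (G.E → ℝ) → ℝ := fun μ => ∑ e, μs e * (G.pd (sig (sfun μ)) e / μs e) ^ 2 with hε₂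
  set gb : (G.E → ℝ) → ℝ :=
    fun μ => Real.sqrt C * (Real.sqrt (ε₁ μ) + Real.sqrt (ε₂ μ)) with hgb
  -- the key pointwise estimate
  have key : ∀ μ : G.E → ℝ, (∀ e, 0 < μ e) → (∀ e, μ e ≤ μs e) →
      |G.green μ D E - ∑ x, G.pushVec S D x * w x| ≤ gb μ := by
    intro μ hpos hle
    have hFμ : ∀ e, μ e ≠ 0 ↔ e ∈ (Set.univ : Set G.E) :=
      fun e => ⟨fun _ => Set.mem_univ _, fun _ => (hpos e).ne'⟩
    have hcex : ∃ c, G.lap μ c = fun i => E i - G.lap μ u i := by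
      apply ResGraph.exists_lap_eq G μ (fun e => (hpos e).le) Set.univ hFμ
      funext x
      rw [ResGraph.pushVec_univ_eq_sum hG, Finset.sum_sub_distrib, hE, ResGraph.sum_lap, sub_zero]
      exact rfl
    obtain ⟨c, hc⟩ := hcex
    have hv : G.lap μ (fun i => u i + c i) = E := by
      funext i
      have h1 := congrFun (map_add (G.lapL μ) u c) i
      simp only [ResGraph.lapL_apply, Pi.add_apply] at h1
      have h2 : (fun i => u i + c i) = u + c := rfl
      rw [h2, h1, congrFun hc i]
      ring
    have hgreen : G.green μ D E = ∑ i, D i * (u i + c i) := by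
      rw [ResGraph.green, dif_pos ⟨fun i => u i + c i, hv⟩]
      exact ResGraph.sum_mul_eq_of_lap_eq hG hpos hD
        ((Classical.choose_spec (⟨fun i => u i + c i, hv⟩ :
          ∃ v, G.lap μ v = E)).trans hv.symm)
    have hdiff : G.green μ D E - ∑ x, G.pushVec S D x * w x = ∑ i, D i * c i := by
      rw [hgreen, ← hDu, ← Finset.sum_sub_distrib]
      exact Finset.sum_congr rfl fun i _ => by ring
    -- energy of c
    set Qc : ℝ := ∑ e, G.pd c e ^ 2 / μ e with hQc
    have hQc0 : 0 ≤ Qc :=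
      Finset.sum_nonneg fun e _ => div_nonneg (sq_nonneg _) (hpos e).le
    have hQgreen : ∑ i, c i * G.lap μ c i = Qc := by
      rw [ResGraph.green_identity, hQc]
      exact Finset.sum_congr rfl fun e _ => by rw [sq, mul_div_assoc]
    have hsplit : ∑ i, c i * G.lap μ c i
        = (∑ i, c i * G.lap ν p i) + (∑ i, c i * G.lap μs (sig (sfun μ)) i) := by
      rw [hpspec, hsigspec (sfun μ) (hsmem μ), ← Finset.sum_add_distrib]
      refine Finset.sum_congr rfl fun i _ => ?_
      rw [congrFun hc i]
      have e1 : r₀ i = E i - G.lap μ₀ u i := rfl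
      have e2 : sfun μ i = G.lap μ₀ u i - G.lap μ u i := rfl
      rw [e1, e2]
      ring
    have hb1 : |∑ i, c i * G.lap ν p i| ≤ Real.sqrt Qc * Real.sqrt (ε₁ μ) := by
      rw [ResGraph.green_identity]
      have := ResGraph.cs_bound G hpos c p ν
      rw [hQc, hε₁]
      exact this
    have hmono2 : ∀ (y : G.V → ℝ), Real.sqrt (∑ e, μ e * (G.pd y e / μs e) ^ 2)
        ≤ Real.sqrt (∑ e, μs e * (G.pd y e / μs e) ^ 2) :=
      fun y => Real.sqrt_le_sqrt (Finset.sum_le_sum fun e _ =>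
        mul_le_mul_of_nonneg_right (hle e) (sq_nonneg _))
    have hb2 : |∑ i, c i * G.lap μs (sig (sfun μ)) i|
        ≤ Real.sqrt Qc * Real.sqrt (ε₂ μ) := by
      rw [ResGraph.green_identity]
      refine (ResGraph.cs_bound G hpos c _ μs).trans ?_
      rw [hQc, hε₂]
      exact mul_le_mul_of_nonneg_left (hmono2 _) (Real.sqrt_nonneg _)
    have hQle : Qc ≤ Real.sqrt Qc * (Real.sqrt (ε₁ μ) + Real.sqrt (ε₂ μ)) := by
      calc Qc = ∑ i, c i * G.lap μ c i := hQgreen.symm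
        _ = (∑ i, c i * G.lap ν p i) + (∑ i, c i * G.lap μs (sig (sfun μ)) i) := hsplit
        _
          ≤ |∑ i, c i * G.lap ν p i| + |∑ i, c i * G.lap μs (sig (sfun μ)) i| :=
            add_le_add (le_abs_self _) (le_abs_self _)
        _ ≤ Real.sqrt Qc * Real.sqrt (ε₁ μ) + Real.sqrt Qc * Real.sqrt (ε₂ μ) :=
            add_le_add hb1 hb2
        _ = Real.sqrt Qc * (Real.sqrt (ε₁ μ) + Real.sqrt (ε₂ μ)) := by ring
    have hsq : Real.sqrt Qc ≤ Real.sqrt (ε₁ μ) + Real.sqrt (ε₂ μ) :=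
      ResGraph.sqrt_le_of_le_sqrt_mul hQc0
        (add_nonneg (Real.sqrt_nonneg _) (Real.sqrt_nonneg _)) hQle
    have hDc : ∑ i, D i * c i = ∑ i, c i * G.lap μs d₀ i := by
      rw [hdspec]
      exact Finset.sum_congr rfl fun i _ => mul_comm _ _
    rw [hdiff, hDc, ResGraph.green_identity]
    calc |∑ e, G.pd c e * (G.pd d₀ e / μs e)|
        ≤ Real.sqrt (∑ e, G.pd c e ^ 2 / μ e)
          * Real.sqrt (∑ e, μ e * (G.pd d₀ e / μs e) ^ 2) := ResGraph.cs_bound G hpos c d₀ μs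
      _ ≤ Real.sqrt Qc * Real.sqrt C := by
          rw [hQc, hC]
          exact mul_le_mul_of_nonneg_left (hmono2 d₀) (Real.sqrt_nonneg _)
      _ ≤ (Real.sqrt (ε₁ μ) + Real.sqrt (ε₂ μ)) * Real.sqrt C :=
          mul_le_mul_of_nonneg_right hsq (Real.sqrt_nonneg _)
      _ = gb μ := by rw [hgb]; ring
  -- the eventual bound
  have hev : ∀ᶠ μ in nhdsWithin μ₀ {μ : G.E → ℝ | ∀ e : G.E, 0 < μ e},
      |G.green μ D E - ∑ x, G.pushVec S D x * w x| ≤ gb μ := by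
    have hev1 : ∀ᶠ μ : G.E → ℝ in nhds μ₀, ∀ e, μ e ≤ μs e := by
      rw [Filter.eventually_all]
      intro e
      have htd : Filter.Tendsto (fun μ : G.E → ℝ => μ e) (nhds μ₀) (nhds (μ₀ e)) :=
        (continuous_apply e).tendsto μ₀
      have hlt : μ₀ e < μs e := by rw [hμs]; dsimp only; linarith
      exact (htd.eventually_lt_const hlt).mono fun μ h => h.le
    filter_upwards [hev1.filter_mono nhdsWithin_le_nhds, self_mem_nhdsWithin] with μ h1 h2
    exact key μ h2 h1
  -- the bound tends to zero
  have hgb0 : Filter.Tendsto gb (nhdsWithin μ₀ {μ : G.E → ℝ | ∀ e : G.E, 0 < μ e})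
      (nhds 0) := by
    have hgb0' : Filter.Tendsto gb (nhds μ₀) (nhds 0) := by
      have hε₁c : Filter.Tendsto ε₁ (nhds μ₀) (nhds 0) := by
        have hcont : Continuous ε₁ := by
          rw [hε₁]
          exact continuous_finset_sum _ fun e _ => (continuous_apply e).mul continuous_const
        have hval : ε₁ μ₀ = 0 := by
          rw [hε₁]
          refine Finset.sum_eq_zero fun e _ => ?_
          by_cases h : μ₀ e = 0
          · have : ν e = 1 := by rw [hν]; dsimp only; rw [if_pos h]
            rw [h, zero_mul]
          · have hνe : ν e = 0 := by rw [hν]; dsimp only; rw [if_neg h]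
            rw [hνe, div_zero, zero_pow two_ne_zero, mul_zero]
        exact hval ▸ hcont.tendsto μ₀
      have hsc : Filter.Tendsto sfun (nhds μ₀) (nhds 0) := by
        rw [tendsto_pi_nhds]
        intro i
        have hlapc : Filter.Tendsto (fun μ : G.E → ℝ => G.lap μ u i)
            (nhds μ₀) (nhds (G.lap μ₀ u i)) := by
          unfold ResGraph.lap
          refine tendsto_finset_sum _ fun j _ => tendsto_finset_sum _ fun e _ => ?_
          by_cases hcond : G.ends e = s(i, j)
          · simp only [if_pos hcond]
            by_cases h0 : μ₀ e = 0
            · have huij : u i = u j := by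
                have hcm : G.cmk S i = G.cmk S j := ResGraph.cmk_eq_of_adj ⟨e, h0, hcond⟩
                rw [hu]
                dsimp only
                rw [hcm]
              rw [huij, sub_self]
              simp only [zero_div]
              exact tendsto_const_nhds
            · exact Filter.Tendsto.div tendsto_const_nhds
                ((continuous_apply e).tendsto μ₀) h0
          · simp only [if_neg hcond]
            exact tendsto_const_nhds
        have := Filter.Tendsto.sub
          (tendsto_const_nhds : Filter.Tendsto (fun _ : G.E → ℝ => G.lap μ₀ u i)
            (nhds μ₀) (nhds (G.lap μ₀ u i))) hlapc
        rw [hsfun]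
        simpa using this
      have hε₂c : Filter.Tendsto ε₂ (nhds μ₀) (nhds 0) := by
        have hsigc : Continuous fun s : G.V → ℝ => sig s :=
          sig.continuous_of_finiteDimensional
        have hφc : Continuous fun s : G.V → ℝ =>
            ∑ e, μs e * (G.pd (sig s) e / μs e) ^ 2 := by
          refine continuous_finset_sum _ fun e _ => Continuous.mul continuous_const ?_
          refine Continuous.pow ?_ 2
          refine Continuous.div_const ?_ _
          simp only [ResGraph.pd]
          exact ((continuous_apply _).comp hsigc).sub ((continuous_apply _).comp hsigc)
        have hval : (∑ e, μs e * (G.pd (sig (0 : G.V → ℝ)) e / μs e) ^ 2) = 0 := by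
          refine Finset.sum_eq_zero fun e _ => ?_
          rw [map_zero]
          simp [ResGraph.pd]
        have := (hφc.tendsto 0).comp hsc
        rw [hε₂]
        rw [hval] at this
        exact this
      have hfinal := Filter.Tendsto.mul
        (tendsto_const_nhds : Filter.Tendsto (fun _ : G.E → ℝ => Real.sqrt C)
          (nhds μ₀) (nhds (Real.sqrt C)))
        (Filter.Tendsto.add
          ((Real.continuous_sqrt.tendsto 0).comp hε₁c)
          ((Real.continuous_sqrt.tendsto 0).comp hε₂c))
      rw [hgb]
      simpa using hfinal
    exact hgb0'.mono_left nhdsWithin_le_nhds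
  have hzero : Filter.Tendsto
      (fun μ : G.E → ℝ => G.green μ D E - ∑ x, G.pushVec S D x * w x)
      (nhdsWithin μ₀ {μ : G.E → ℝ | ∀ e : G.E, 0 < μ e}) (nhds 0) :=
    squeeze_zero_norm' (by simpa [Real.norm_eq_abs] using hev) hgb0
  rw [hT]
  have := hzero.add (tendsto_const_nhds :
    Filter.Tendsto (fun _ : G.E → ℝ => ∑ x, G.pushVec S D x * w x)
      (nhdsWithin μ₀ {μ : G.E → ℝ | ∀ e : G.E, 0 < μ e})
      (nhds (∑ x, G.pushVec S D x * w x)))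
  simpa using this
end

section
/- Let Γ be a connected graph and let D, E ∈ ℝ^{Vert(Γ)} be zero-sum vectors. Then the Green's function g(Γ, ·; D, E), defined on the set of proper resistances ℝ_{>0}^{Ed(Γ)}, extends to a continuous function on ℝ_{≥0}^{Ed(Γ)}. -/
open Classical
open scoped BigOperators

/-- A graph: a finite set of vertices, a finite set of edges, and a map assigning to
each edge its unordered pair of endpoints (loops and parallel edges allowed). -/
structure RGraph where
  V : Type
  E : Type
  [fintV : Fintype V]
  [decV : DecidableEq V]
  [fintE : Fintype E]
  [decE : DecidableEq E]
  ends : E → Sym2 V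

attribute [instance] RGraph.fintV RGraph.decV RGraph.fintE RGraph.decE

namespace RGraph

variable (G : RGraph)

/-- The Laplacian of the resistive network `(G, μ)` applied to a voltage assignment `v`:
`(L v) i = Σ_j Σ_{edges e : i → j} (v i − v j) / μ e`. -/
noncomputable def lap (μ : G.E → ℝ) (v : G.V → ℝ) : G.V → ℝ := fun i =>
  ∑ j : G.V, ∑ e : G.E, if G.ends e = s(i, j) then (v i - v j) / μ e else 0

/-- `i` and `j` are joined by an edge belonging to `F`. -/
def Adj (F : Set G.E) (i j : G.V) : Prop := ∃ e ∈ F, G.ends e = s(i, j)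

/-- `i` and `j` lie in the same connected component of the subgraph `Γ|_F`
(the subgraph with all vertices of `Γ` and edge set `F`). -/
def Reach (F : Set G.E) (i j : G.V) : Prop := Relation.EqvGen (G.Adj F) i j

/-- The subgraph `Γ|_F` is connected. -/
def ConnOn (F : Set G.E) : Prop := ∀ i j : G.V, G.Reach F i j

/-- The graph `G` is connected. -/
def Connected : Prop := G.ConnOn Set.univ

/-- The set of connected components of the subgraph `Γ|_F`. -/
def Comp (F : Set G.E) : Type := Quotient (Relation.EqvGen.setoid (G.Adj F))

/-- A walk from `i` to `j`: a finite sequence of vertices together with a choice of an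
edge from each vertex to the next. -/
inductive Walk : G.V → G.V → Type
  | nil (i : G.V) : Walk i i
  | cons {i j k : G.V} (e : G.E) (he : G.ends e = s(i, j)) (w : Walk j k) : Walk i k

namespace Walk

variable {G}

/-- The list of vertices visited by a walk, in order (starting vertex first). -/
def vertices : ∀ {i j : G.V}, G.Walk i j → List G.V
  | _, _, .nil a => [a]
  | _, _, @Walk.cons _ a _ _ _ _ w => a :: vertices w

/-- The list of edges traversed by a walk, in order. -/
def edges : ∀ {i j : G.V}, G.Walk i j → List G.E
  | _, _, .nil _ => []
  | _, _, .cons e _ w => e :: edges w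

/-- The list of steps `(source, edge, target)` of a walk. -/
def steps : ∀ {i j : G.V}, G.Walk i j → List (G.V × G.E × G.V)
  | _, _, .nil _ => []
  | _, _, @Walk.cons _ a b _ e _ w => (a, e, b) :: steps w

/-- All edges of the walk lie in the edge set `F`. -/
def In {i j : G.V} (w : G.Walk i j) (F : Set G.E) : Prop := ∀ e ∈ w.edges, e ∈ F

/-- A path: a walk all of whose vertices are distinct, except possibly the start and the
end vertex (and which does not traverse any edge twice). -/
def IsPath {i j : G.V} (w : G.Walk i j) : Prop :=
  w.vertices.dropLast.Nodup ∧ w.vertices.tail.Nodup ∧ w.edges.Nodup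

/-- Change the (definitionally equal) endpoints of a walk. -/
def copy : ∀ {i j i' j' : G.V}, G.Walk i j → i = i' → j = j' → G.Walk i' j'
  | _, _, _, _, w, rfl, rfl => w

variable (G)

end Walk

/-- `F` is cycle-free: the subgraph `Γ|_F` contains no cycle, i.e. every closed path
with edges in `F` is trivial. -/
def CycleFree (F : Set G.E) : Prop :=
  ∀ (i : G.V) (w : G.Walk i i), w.In F → w.IsPath → w.edges = []

/-- `T` is a spanning tree of `G`: the subgraph `Γ|_T` is connected and cycle-free. -/
def IsSpanningTree (T : Set G.E) : Prop := G.ConnOn T ∧ G.CycleFree T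

/-- `F` is a 2-forest: `Γ|_F` is cycle-free with exactly two connected components. -/
def IsTwoForest (F : Set G.E) : Prop := G.CycleFree F ∧ Nat.card (G.Comp F) = 2

/-- `M` is a maximal forest of the subgraph `Γ|_S`: it is a cycle-free subset of `S`
containing a spanning tree of each connected component of `Γ|_S` (equivalently,
inducing the same connected components as `S`). -/
def IsMaxForestOf (M S : Set G.E) : Prop :=
  M ⊆ S ∧ G.CycleFree M ∧ ∀ i j : G.V, G.Reach S i j ↔ G.Reach M i j

/-- The sign `σ(i,j;k,ℓ;F)` attached to a 2-forest `F`: `+1` if one component of `Γ|_F`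
contains `i` and `k` and the other contains `j` and `ℓ`; `-1` if one component contains
`i` and `ℓ` and the other contains `j` and `k`; `0` otherwise. -/
noncomputable def sigma2 (F : Set G.E) (i j k l : G.V) : ℝ :=
  if ¬ G.Reach F i j ∧ G.Reach F i k ∧ G.Reach F j l then 1
  else if ¬ G.Reach F i j ∧ G.Reach F i l ∧ G.Reach F j k then -1
  else 0

end RGraph

namespace RGraph

variable (G : RGraph)

/-- An oriented edge: an edge together with an ordering of its endpoints. -/
def OEdge : Type := {x : G.E × G.V × G.V // G.ends x.1 = s(x.2.1, x.2.2)}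

noncomputable instance : Fintype G.OEdge := Subtype.fintype _

namespace OEdge

variable {G}

/-- The underlying edge of an oriented edge. -/
def edge (o : G.OEdge) : G.E := o.1.1

/-- The source of an oriented edge. -/
def src (o : G.OEdge) : G.V := o.1.2.1

/-- The target of an oriented edge. -/
def tgt (o : G.OEdge) : G.V := o.1.2.2

/-- The reversal of an oriented edge. -/
def rev (o : G.OEdge) : G.OEdge := ⟨(o.1.1, o.1.2.2, o.1.2.1), o.2.trans Sym2.eq_swap⟩

end OEdge

/-- An edge current assignment: a real-valued function on oriented edges with
`I(e : i → j) = −I(e : j → i)`. -/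
def IsCurrent (I : G.OEdge → ℝ) : Prop := ∀ o : G.OEdge, I o.rev = - I o

/-- The edge current assignment `I` is consistent with the vertex current assignment `D`:
for every vertex `i`, `Σ_j Σ_{edges e : i → j} I(e : i → j) = D i`. -/
def Consistent (I : G.OEdge → ℝ) (D : G.V → ℝ) : Prop :=
  ∀ x : G.V, (∑ o ∈ Finset.univ.filter (fun o : G.OEdge => o.src = x), I o) = D x

lemma exists_oedge (e : G.E) : ∃ o : G.OEdge, o.edge = e := by
  have h : ∀ z : Sym2 G.V, G.ends e = z → ∃ o : G.OEdge, o.edge = e := by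
    refine Sym2.ind (fun a b h => ?_)
    exact ⟨⟨(e, a, b), h⟩, rfl⟩
  exact h (G.ends e) rfl

/-- A choice of orientation for each edge. -/
noncomputable def orient (e : G.E) : G.OEdge := Classical.choose (G.exists_oedge e)

lemma orient_edge (e : G.E) : (G.orient e).edge = e := Classical.choose_spec (G.exists_oedge e)

/-- The power dissipated by an edge current assignment: `Σ_{e ∈ Ed(Γ)} μ(e) I(e)²`. -/
noncomputable def power (μ : G.E → ℝ) (I : G.OEdge → ℝ) : ℝ :=
  ∑ e : G.E, μ e * (I (G.orient e)) ^ 2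

/-- The Green's function `g(Γ, μ; D, E) = Dᵀ v` for any `v` with `L v = E`
(for `Γ` connected, `μ` proper, and `D`, `E` zero-sum vectors, such a `v` exists and
`Dᵀ v` does not depend on the choice). -/
noncomputable def green (μ : G.E → ℝ) (D E : G.V → ℝ) : ℝ :=
  if h : ∃ v : G.V → ℝ, G.lap μ v = E then ∑ x : G.V, D x * Classical.choose h x else 0

/-- The contracted graph `Γ/S`: identify the two endpoints of each edge in `S` and
delete the edges in `S`. -/
noncomputable def contract (S : Set G.E) : RGraph :=
  letI : DecidableEq (Quotient (Relation.EqvGen.setoid (G.Adj S))) := Classical.decEq _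
  letI : DecidablePred (· ∈ S) := Classical.decPred _
  { V := Quotient (Relation.EqvGen.setoid (G.Adj S))
    E := {e : G.E // e ∉ S}
    ends := fun e => (G.ends e.1).map (Quotient.mk (Relation.EqvGen.setoid (G.Adj S))) }

/-- The quotient map `[·] : Vert(Γ) → Vert(Γ/S)`. -/
noncomputable def cmk (S : Set G.E) (x : G.V) : (G.contract S).V :=
  Quotient.mk (Relation.EqvGen.setoid (G.Adj S)) x

/-- The edge of `Γ` underlying an edge of `Γ/S` (recall `Ed(Γ/S) = Ed(Γ)∖S`). -/
noncomputable def cval (S : Set G.E) (e : (G.contract S).E) : G.E := e.1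

/-- The subset of `Ed(Γ/S) = Ed(Γ)∖S` induced by a subset `F ⊆ Ed(Γ)`, namely `F∖S`. -/
noncomputable def cset (S : Set G.E) (F : Set G.E) : Set (G.contract S).E :=
  {e : (G.contract S).E | G.cval S e ∈ F}

/-- The linear map `[·] : ℝ^{Vert(Γ)} → ℝ^{Vert(Γ/S)}` sending the basis vector `e_i`
to `e_{[i]}`. -/
noncomputable def pushVec (S : Set G.E) (D : G.V → ℝ) : (G.contract S).V → ℝ := fun x =>
  ∑ i ∈ Finset.univ.filter (fun i : G.V => G.cmk S i = x), D i

/-- Contraction of walks: delete from a walk in `Γ` the edges belonging to `S`,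
obtaining a walk in `Γ/S`. -/
noncomputable def contractWalk (S : Set G.E) :
    ∀ {i j : G.V}, G.Walk i j → (G.contract S).Walk (G.cmk S i) (G.cmk S j)
  | _, _, .nil a => .nil (G.cmk S a)
  | _, _, @Walk.cons _ a b _ e he w =>
    if hS : e ∈ S then
      (contractWalk S w).copy
        (Quotient.sound (Relation.EqvGen.rel b a ⟨e, hS, he.trans Sym2.eq_swap⟩)) rfl
    else
      Walk.cons (j := G.cmk S b) ⟨e, hS⟩
        (by show Sym2.map _ (G.ends e) = s(G.cmk S a, G.cmk S b)
            rw [he]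
            exact Sym2.map_pair_eq _ a b) (contractWalk S w)

/-- The current `I_{Γ|_T}(e : i → j)` flowing along the oriented edge `e : i → j` when a
unit current from `k` to `ℓ` is imposed on the spanning tree `Γ|_T`: it is `+1` if `e ∈ T`
and the unique path in `Γ|_T` from `k` to `ℓ` traverses `e` from `i` to `j`, `−1` if it
traverses `e` from `j` to `i`, and `0` otherwise. -/
noncomputable def treeCurrent (T : Set G.E) (k l : G.V) (e : G.E) (i j : G.V) : ℝ :=
  if e ∈ T ∧ ∃ w : G.Walk k l, w.IsPath ∧ w.In T ∧ (i, e, j) ∈ w.steps then 1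
  else if e ∈ T ∧ ∃ w : G.Walk k l, w.IsPath ∧ w.In T ∧ (j, e, i) ∈ w.steps then -1
  else 0

/-- The extended Green's function on possibly improper resistances: contract the edges of
zero resistance and take the Green's function of the resulting proper network, with the
pushed-forward vertex vectors. -/
noncomputable def egreen (μ : G.E → ℝ) (D E : G.V → ℝ) : ℝ :=
  (G.contract {e : G.E | μ e = 0}).green (fun e => μ (G.cval {e : G.E | μ e = 0} e))
    (G.pushVec {e : G.E | μ e = 0} D) (G.pushVec {e : G.E | μ e = 0} E)

end RGraph

namespace RGraph

variable {G : RGraph}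

/-! ### Walk operations -/

def Walk.append : ∀ {i j k : G.V}, G.Walk i j → G.Walk j k → G.Walk i k
  | _, _, _, .nil _, w => w
  | _, _, _, .cons e he w, w' => .cons e he (w.append w')

def Walk.reverse : ∀ {i j : G.V}, G.Walk i j → G.Walk j i
  | _, _, .nil a => .nil a
  | _, _, @Walk.cons _ a _b _ e he w =>
      (Walk.reverse w).append (.cons e (he.trans Sym2.eq_swap) (.nil a))

lemma reach_walk {F : Set G.E} {i j : G.V} (h : G.Reach F i j) : Nonempty (G.Walk i j) := by
  induction h with
  | rel i j h => obtain ⟨e, -, he⟩ := h; exact ⟨.cons e he (.nil j)⟩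
  | refl i => exact ⟨.nil i⟩
  | symm i j _ ih => exact ⟨ih.some.reverse⟩
  | trans i j k _ _ ih1 ih2 => exact ⟨ih1.some.append ih2.some⟩

/-! ### Oriented edges -/

namespace OEdge

@[simp] lemma edge_rev (o : G.OEdge) : o.rev.edge = o.edge := rfl
@[simp] lemma src_rev (o : G.OEdge) : o.rev.src = o.tgt := rfl
@[simp] lemma tgt_rev (o : G.OEdge) : o.rev.tgt = o.src := rfl
@[simp] lemma rev_rev (o : G.OEdge) : o.rev.rev = o := rfl

lemma ends_eq (o : G.OEdge) : G.ends o.edge = s(o.src, o.tgt) := o.2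

lemma rev_eq_iff {o o' : G.OEdge} : o.rev = o' ↔ o = o'.rev := by
  constructor
  · rintro rfl; rfl
  · rintro rfl; rfl

/-- Reversal as an equivalence. -/
def revEquiv : G.OEdge ≃ G.OEdge := ⟨rev, rev, fun _ => rfl, fun _ => rfl⟩

end OEdge

lemma sum_rev (f : G.OEdge → ℝ) : ∑ o : G.OEdge, f o.rev = ∑ o : G.OEdge, f o :=
  Fintype.sum_equiv OEdge.revEquiv _ _ (fun _ => rfl)

/-! ### Divergence -/

/-- The divergence of an edge function at a vertex. -/
noncomputable def dvg (I : G.OEdge → ℝ) (x : G.V) : ℝ :=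
  ∑ o ∈ Finset.univ.filter (fun o : G.OEdge => o.src = x), I o

lemma consistent_iff {I : G.OEdge → ℝ} {A : G.V → ℝ} :
    G.Consistent I A ↔ ∀ x, dvg I x = A x := Iff.rfl

/-- Reformulation of the Laplacian as a sum over oriented edges with given source. -/
lemma lap_eq (μ : G.E → ℝ) (v : G.V → ℝ) (x : G.V) :
    G.lap μ v x = dvg (fun o : G.OEdge => (v o.src - v o.tgt) / μ o.edge) x := by
  classical
  unfold lap dvg
  rw [show (∑ j : G.V, ∑ e : G.E, if G.ends e = s(x, j) then (v x - v j) / μ e else 0)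
      = ∑ j : G.V, ∑ e ∈ Finset.univ.filter (fun e => G.ends e = s(x, j)),
          (v x - v j) / μ e from by
    refine Finset.sum_congr rfl fun j _ => ?_
    rw [Finset.sum_filter]]
  rw [Finset.sum_sigma']
  refine Finset.sum_bij' (fun p hp => (⟨(p.2, x, p.1), by
      simpa using (Finset.mem_filter.mp (Finset.mem_sigma.mp hp).2).2⟩ : G.OEdge))
    (fun o ho => ⟨o.tgt, o.edge⟩) ?_ ?_ ?_ ?_ ?_
  · intro p hp
    exact Finset.mem_filter.mpr ⟨Finset.mem_univ _, rfl⟩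
  · intro o ho
    have hx : o.src = x := by simpa using ho
    simp only [Finset.mem_sigma, Finset.mem_univ, Finset.mem_filter, true_and]
    rw [o.ends_eq, hx]
  · intro p hp; rfl
  · intro o ho
    have hx : o.src = x := by simpa using ho
    apply Subtype.ext
    obtain ⟨⟨e, a, b⟩, h⟩ := o
    simp only at hx ⊢
    simp [OEdge.edge, OEdge.tgt, OEdge.src] at hx ⊢
    exact hx.symm
  · intro p hp; rfl

end RGraph
namespace RGraph

variable {G : RGraph}

lemma sum_mul_dvg (u : G.V → ℝ) (I : G.OEdge → ℝ) :
    ∑ x : G.V, u x * dvg I x = ∑ o : G.OEdge, u o.src * I o := by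
  classical
  unfold dvg
  rw [← Finset.sum_fiberwise Finset.univ (fun o : G.OEdge => o.src)
    (fun o => u o.src * I o)]
  refine Finset.sum_congr rfl fun x _ => ?_
  rw [Finset.mul_sum]
  refine Finset.sum_congr rfl fun o ho => ?_
  rw [(Finset.mem_filter.mp ho).2]

lemma sum_dvg (I : G.OEdge → ℝ) : ∑ x : G.V, dvg I x = ∑ o : G.OEdge, I o := by
  have := sum_mul_dvg (fun _ => (1:ℝ)) I
  simpa using this

lemma sum_current_zero {I : G.OEdge → ℝ} (hI : G.IsCurrent I) : ∑ o : G.OEdge, I o = 0 := by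
  have h : ∑ o : G.OEdge, I o.rev = ∑ o : G.OEdge, I o := sum_rev I
  have h2 : ∑ o : G.OEdge, I o.rev = -∑ o : G.OEdge, I o := by
    rw [← Finset.sum_neg_distrib]
    exact Finset.sum_congr rfl fun o _ => hI o
  linarith

/-- Summation by parts for currents. -/
lemma two_mul_sum_src {u : G.V → ℝ} {J : G.OEdge → ℝ} (hJ : G.IsCurrent J) :
    ∑ o : G.OEdge, (u o.src - u o.tgt) * J o = 2 * ∑ o : G.OEdge, u o.src * J o := by
  have h : ∑ o : G.OEdge, u o.tgt * J o = -∑ o : G.OEdge, u o.src * J o := by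
    rw [← sum_rev (fun o => u o.tgt * J o), ← Finset.sum_neg_distrib]
    refine Finset.sum_congr rfl fun o _ => ?_
    simp only [OEdge.tgt_rev]
    rw [hJ o]; ring
  have hsplit : ∑ o : G.OEdge, (u o.src - u o.tgt) * J o
      = ∑ o : G.OEdge, u o.src * J o - ∑ o : G.OEdge, u o.tgt * J o := by
    rw [← Finset.sum_sub_distrib]
    exact Finset.sum_congr rfl fun o _ => by ring
  rw [hsplit, h]; ring

/-- The current induced by a potential. -/
noncomputable def vCur (μ : G.E → ℝ) (v : G.V → ℝ) : G.OEdge → ℝ :=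
  fun o => (v o.src - v o.tgt) / μ o.edge

lemma isCurrent_vCur (μ : G.E → ℝ) (v : G.V → ℝ) : G.IsCurrent (vCur μ v) := by
  intro o
  unfold vCur
  simp only [OEdge.src_rev, OEdge.tgt_rev, OEdge.edge_rev]
  ring

lemma dvg_vCur (μ : G.E → ℝ) (v : G.V → ℝ) (x : G.V) :
    dvg (vCur μ v) x = G.lap μ v x := (lap_eq μ v x).symm

/-- The key symmetric pairing formula for the Laplacian. -/
lemma lap_pairing (μ : G.E → ℝ) (v w : G.V → ℝ) :
    2 * ∑ x : G.V, v x * G.lap μ w x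
      = ∑ o : G.OEdge, (v o.src - v o.tgt) * ((w o.src - w o.tgt) / μ o.edge) := by
  have h1 : ∑ x : G.V, v x * G.lap μ w x = ∑ o : G.OEdge, v o.src * vCur μ w o := by
    rw [← sum_mul_dvg]
    exact Finset.sum_congr rfl fun x _ => by rw [dvg_vCur]
  rw [h1, ← two_mul_sum_src (isCurrent_vCur μ w)]
  rfl

lemma lap_sym (μ : G.E → ℝ) (v w : G.V → ℝ) :
    ∑ x : G.V, v x * G.lap μ w x = ∑ x : G.V, w x * G.lap μ v x := by
  have h1 := lap_pairing μ v w
  have h2 := lap_pairing μ w v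
  have h3 : ∑ o : G.OEdge, (v o.src - v o.tgt) * ((w o.src - w o.tgt) / μ o.edge)
      = ∑ o : G.OEdge, (w o.src - w o.tgt) * ((v o.src - v o.tgt) / μ o.edge) :=
    Finset.sum_congr rfl fun o _ => by ring
  linarith

end RGraph
namespace RGraph

variable {G : RGraph}

lemma OEdge.ext' {o o' : G.OEdge} (h1 : o.edge = o'.edge) (h2 : o.src = o'.src)
    (h3 : o.tgt = o'.tgt) : o = o' := by
  obtain ⟨⟨e, a, b⟩, h⟩ := o
  obtain ⟨⟨e', a', b'⟩, h'⟩ := o'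
  simp only [OEdge.edge, OEdge.src, OEdge.tgt] at h1 h2 h3
  subst h1; subst h2; subst h3; rfl

lemma eq_orient_or_rev {o : G.OEdge} {e : G.E} (ho : o.edge = e) :
    o = G.orient e ∨ o = (G.orient e).rev := by
  have h1 : s(o.src, o.tgt) = s((G.orient e).src, (G.orient e).tgt) := by
    rw [← o.ends_eq, ← (G.orient e).ends_eq, ho, G.orient_edge]
  rw [Sym2.eq_iff] at h1
  rcases h1 with ⟨h2, h3⟩ | ⟨h2, h3⟩
  · exact Or.inl (OEdge.ext' (by rw [ho, G.orient_edge]) h2 h3)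
  · exact Or.inr (OEdge.ext' (by rw [ho, OEdge.edge_rev, G.orient_edge])
      (by rw [OEdge.src_rev, h2]) (by rw [OEdge.tgt_rev, h3]))

lemma filter_edge_eq (e : G.E) :
    Finset.univ.filter (fun o : G.OEdge => o.edge = e)
      = {G.orient e, (G.orient e).rev} := by
  classical
  ext o
  simp only [Finset.mem_filter, Finset.mem_univ, true_and, Finset.mem_insert,
    Finset.mem_singleton]
  constructor
  · exact eq_orient_or_rev
  · rintro (rfl | rfl)
    · exact G.orient_edge e
    · exact G.orient_edge e

/-- Sum over all oriented edges of a reversal-invariant function vanishing on loops. -/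
lemma sum_oedge_eq {f : G.OEdge → ℝ} (hrev : ∀ o, f o.rev = f o)
    (hloop : ∀ o : G.OEdge, o.rev = o → f o = 0) :
    ∑ o : G.OEdge, f o = 2 * ∑ e : G.E, f (G.orient e) := by
  classical
  rw [← Finset.sum_fiberwise Finset.univ (fun o : G.OEdge => o.edge) f, Finset.mul_sum]
  refine Finset.sum_congr rfl fun e _ => ?_
  rw [filter_edge_eq]
  by_cases h : (G.orient e).rev = G.orient e
  · rw [h, Finset.insert_eq_self.mpr (Finset.mem_singleton_self _), Finset.sum_singleton,
      hloop _ h]; ring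
  · rw [Finset.sum_pair (Ne.symm h), hrev]; ring

lemma power_eq_half {μ : G.E → ℝ} {I : G.OEdge → ℝ} (hI : G.IsCurrent I) :
    2 * G.power μ I = ∑ o : G.OEdge, μ o.edge * I o ^ 2 := by
  unfold power
  rw [sum_oedge_eq (f := fun o => μ o.edge * I o ^ 2)
    (fun o => by
      show μ o.rev.edge * I o.rev ^ 2 = μ o.edge * I o ^ 2
      rw [OEdge.edge_rev, hI o]; ring)
    (fun o h => by
      show μ o.edge * I o ^ 2 = 0
      have h1 : I o = 0 := by have := hI o; rw [h] at this; linarith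
      rw [h1]; ring)]
  congr 1
  exact Finset.sum_congr rfl fun e _ => by rw [G.orient_edge]

lemma power_nonneg {μ : G.E → ℝ} (hμ : ∀ e, 0 ≤ μ e) (I : G.OEdge → ℝ) :
    0 ≤ G.power μ I := by
  unfold power
  exact Finset.sum_nonneg fun e _ => mul_nonneg (hμ e) (sq_nonneg _)

end RGraph
namespace RGraph

variable {G : RGraph}

lemma dvg_sub (I I' : G.OEdge → ℝ) (x : G.V) :
    dvg (fun o => I o - I' o) x = dvg I x - dvg I' x := by
  unfold dvg; rw [← Finset.sum_sub_distrib]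

lemma sum_mu_vCur_sq {μ : G.E → ℝ} (hμ : ∀ e, 0 < μ e) {A v : G.V → ℝ}
    (hv : G.lap μ v = A) :
    ∑ o : G.OEdge, μ o.edge * vCur μ v o ^ 2 = 2 * ∑ x : G.V, A x * v x := by
  have h1 : ∀ o : G.OEdge, μ o.edge * vCur μ v o ^ 2
      = (v o.src - v o.tgt) * vCur μ v o := by
    intro o
    have hne : μ o.edge ≠ 0 := (hμ o.edge).ne'
    unfold vCur
    field_simp
  have h2 : ∑ x : G.V, v x * dvg (vCur μ v) x = ∑ x : G.V, A x * v x :=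
    Finset.sum_congr rfl fun x _ => by rw [dvg_vCur μ v x, hv, mul_comm]
  rw [Finset.sum_congr rfl fun o _ => h1 o, two_mul_sum_src (isCurrent_vCur μ v),
    ← sum_mul_dvg, h2]

lemma power_vCur {μ : G.E → ℝ} (hμ : ∀ e, 0 < μ e) {A v : G.V → ℝ}
    (hv : G.lap μ v = A) :
    G.power μ (vCur μ v) = ∑ x : G.V, A x * v x := by
  have h := power_eq_half (isCurrent_vCur μ v) (μ := μ)
  have h2 := sum_mu_vCur_sq hμ hv
  linarith

lemma power_ge {μ : G.E → ℝ} (hμ : ∀ e, 0 < μ e) {A v : G.V → ℝ} {I : G.OEdge → ℝ}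
    (hv : G.lap μ v = A) (hI : G.IsCurrent I) (hIc : G.Consistent I A) :
    ∑ x : G.V, A x * v x ≤ G.power μ I := by
  set J : G.OEdge → ℝ := fun o => I o - vCur μ v o with hJdef
  have hJ : G.IsCurrent J := by
    intro o
    show I o.rev - vCur μ v o.rev = -(I o - vCur μ v o)
    rw [hI o, isCurrent_vCur μ v o]; ring
  have hdvgJ : ∀ x, dvg J x = 0 := by
    intro x
    rw [hJdef, dvg_sub, consistent_iff.mp hIc x, dvg_vCur μ v x, hv, sub_self]
  have hcross : ∑ o : G.OEdge, μ o.edge * (vCur μ v o * J o) = 0 := by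
    have h1 : ∀ o : G.OEdge, μ o.edge * (vCur μ v o * J o)
        = (v o.src - v o.tgt) * J o := by
      intro o
      have hne : μ o.edge ≠ 0 := (hμ o.edge).ne'
      unfold vCur
      field_simp
    have h2 : ∑ x : G.V, v x * dvg J x = 0 :=
      Finset.sum_eq_zero fun x _ => by rw [hdvgJ x, mul_zero]
    rw [Finset.sum_congr rfl fun o _ => h1 o, two_mul_sum_src hJ, ← sum_mul_dvg, h2,
      mul_zero]
  have hsq : 0 ≤ ∑ o : G.OEdge, μ o.edge * J o ^ 2 :=
    Finset.sum_nonneg fun o _ => mul_nonneg (hμ o.edge).le (sq_nonneg _)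
  have hsplit : ∑ o : G.OEdge, μ o.edge * I o ^ 2
      = ∑ o : G.OEdge, μ o.edge * vCur μ v o ^ 2
        + 2 * ∑ o : G.OEdge, μ o.edge * (vCur μ v o * J o)
        + ∑ o : G.OEdge, μ o.edge * J o ^ 2 := by
    rw [Finset.mul_sum, ← Finset.sum_add_distrib, ← Finset.sum_add_distrib]
    refine Finset.sum_congr rfl fun o _ => ?_
    have h : I o = vCur μ v o + J o := by rw [hJdef]; ring
    rw [h]; ring
  have h1 := power_eq_half hI (μ := μ)
  have h2 := sum_mu_vCur_sq hμ hv
  linarith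

end RGraph
namespace RGraph

variable {G : RGraph}

/-- The unit current along a single oriented edge. -/
noncomputable def pulse (o₀ : G.OEdge) : G.OEdge → ℝ := fun o =>
  (if o = o₀ then 1 else 0) - (if o = o₀.rev then 1 else 0)

lemma isCurrent_pulse (o₀ : G.OEdge) : G.IsCurrent (pulse o₀) := by
  intro o
  unfold pulse
  have h1 : (o.rev = o₀) ↔ (o = o₀.rev) := OEdge.rev_eq_iff
  have h2 : (o.rev = o₀.rev) ↔ (o = o₀) := by
    rw [OEdge.rev_eq_iff, OEdge.rev_rev]
  rw [if_congr h1 rfl rfl, if_congr h2 rfl rfl]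
  ring

lemma dvg_pulse (o₀ : G.OEdge) (x : G.V) :
    dvg (pulse o₀) x = (if o₀.src = x then 1 else 0) - (if o₀.tgt = x then 1 else 0) := by
  classical
  unfold dvg pulse
  rw [Finset.sum_sub_distrib]
  have h1 : ∀ (o' : G.OEdge), (∑ o ∈ Finset.univ.filter (fun o : G.OEdge => o.src = x),
      if o = o' then (1:ℝ) else 0) = if o'.src = x then 1 else 0 := by
    intro o'
    rw [Finset.sum_ite_eq' (Finset.univ.filter (fun o : G.OEdge => o.src = x)) o'
      (fun _ => (1:ℝ))]
    simp
  rw [h1, h1, OEdge.src_rev]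

/-- The unit current along a walk. -/
noncomputable def walkCur : ∀ {i j : G.V}, G.Walk i j → G.OEdge → ℝ
  | _, _, .nil _ => 0
  | _, _, @Walk.cons _ a b _ e he w => fun o => pulse ⟨(e, a, b), he⟩ o + walkCur w o

lemma isCurrent_walkCur : ∀ {i j : G.V} (w : G.Walk i j), G.IsCurrent (walkCur w)
  | _, _, .nil _ => fun o => by simp [walkCur]
  | _, _, @Walk.cons _ a b _ e he w => fun o => by
      show pulse (⟨(e, a, b), he⟩ : G.OEdge) o.rev + walkCur w o.rev
        = -(pulse (⟨(e, a, b), he⟩ : G.OEdge) o + walkCur w o)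
      have hp1 := isCurrent_pulse (⟨(e, a, b), he⟩ : G.OEdge) o
      have hp2 := isCurrent_walkCur w o
      linarith

lemma dvg_walkCur : ∀ {i j : G.V} (w : G.Walk i j) (x : G.V),
    dvg (walkCur w) x = (if i = x then 1 else 0) - (if j = x then 1 else 0)
  | _, _, .nil a => fun x => by simp [walkCur, dvg]
  | _, _, @Walk.cons _ a b c e he w => fun x => by
      have hadd : dvg (walkCur (Walk.cons e he w)) x
          = dvg (pulse (⟨(e, a, b), he⟩ : G.OEdge)) x + dvg (walkCur w) x := by
        unfold dvg
        rw [← Finset.sum_add_distrib]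
        rfl
      have hp : dvg (pulse (⟨(e, a, b), he⟩ : G.OEdge)) x
          = (if a = x then (1:ℝ) else 0) - (if b = x then 1 else 0) := dvg_pulse _ x
      rw [hadd, dvg_walkCur w x]
      linarith

lemma exists_consistent_current (hG : G.Connected) {A : G.V → ℝ}
    (hA : ∑ x : G.V, A x = 0) :
    ∃ I : G.OEdge → ℝ, G.IsCurrent I ∧ G.Consistent I A := by
  classical
  rcases isEmpty_or_nonempty G.V with h | h
  · exact ⟨0, fun o => by simp, fun x => (IsEmpty.false x).elim⟩
  · obtain x₀ := Classical.arbitrary G.V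
    have hw : ∀ x : G.V, Nonempty (G.Walk x x₀) := fun x => reach_walk (hG x x₀)
    set W : ∀ x : G.V, G.Walk x x₀ := fun x => (hw x).some with hW
    refine ⟨fun o => ∑ x : G.V, A x * walkCur (W x) o, ?_, ?_⟩
    · intro o
      show ∑ x : G.V, A x * walkCur (W x) o.rev = _
      rw [← Finset.sum_neg_distrib]
      exact Finset.sum_congr rfl fun x _ => by rw [isCurrent_walkCur (W x) o]; ring
    · intro y
      show dvg (fun o => ∑ x : G.V, A x * walkCur (W x) o) y = A y
      unfold dvg
      rw [Finset.sum_comm]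
      have h1 : ∀ x : G.V, (∑ o ∈ Finset.univ.filter (fun o : G.OEdge => o.src = y),
          A x * walkCur (W x) o) = A x * dvg (walkCur (W x)) y := by
        intro x; rw [dvg, Finset.mul_sum]
      rw [Finset.sum_congr rfl fun x _ => h1 x]
      have h2 : ∀ x : G.V, A x * dvg (walkCur (W x)) y
          = A x * (if x = y then 1 else 0) - A x * (if x₀ = y then 1 else 0) := by
        intro x; rw [dvg_walkCur (W x) y]; ring
      rw [Finset.sum_congr rfl fun x _ => h2 x, Finset.sum_sub_distrib]
      have h3 : (∑ x : G.V, A x * (if x₀ = y then (1:ℝ) else 0)) = 0 := by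
        by_cases hc : x₀ = y
        · simp [hc, ← Finset.sum_mul, hA]
        · simp [hc]
      have h4 : (∑ x : G.V, A x * (if x = y then (1:ℝ) else 0)) = A y := by
        simp only [mul_ite, mul_one, mul_zero]
        rw [Finset.sum_ite_eq' Finset.univ y A]
        simp
      rw [h3, h4, sub_zero]

end RGraph
namespace RGraph

variable {G : RGraph}

/-- The Laplacian as a linear map. -/
noncomputable def lapL (μ : G.E → ℝ) : (G.V → ℝ) →ₗ[ℝ] (G.V → ℝ) where
  toFun := G.lap μ
  map_add' v w := by
    funext x
    simp only [lap_eq, Pi.add_apply, dvg]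
    rw [← Finset.sum_add_distrib]
    exact Finset.sum_congr rfl fun o _ => by ring
  map_smul' c v := by
    funext x
    simp only [lap_eq, Pi.smul_apply, smul_eq_mul, RingHom.id_apply, dvg]
    rw [Finset.mul_sum]
    exact Finset.sum_congr rfl fun o _ => by ring

@[simp] lemma lapL_apply (μ : G.E → ℝ) (v : G.V → ℝ) : lapL μ v = G.lap μ v := rfl

/-- Vertex sum as a linear map. -/
noncomputable def sumL : (G.V → ℝ) →ₗ[ℝ] ℝ where
  toFun v := ∑ x : G.V, v x
  map_add' v w := by simp [Finset.sum_add_distrib]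
  map_smul' c v := by simp [Finset.mul_sum]

lemma sum_lap_zero (μ : G.E → ℝ) (v : G.V → ℝ) : ∑ x : G.V, G.lap μ v x = 0 := by
  have h : ∑ x : G.V, G.lap μ v x = ∑ x : G.V, dvg (vCur μ v) x :=
    Finset.sum_congr rfl fun x _ => by rw [dvg_vCur]
  rw [h, sum_dvg]
  exact sum_current_zero (isCurrent_vCur μ v)

lemma const_of_lap_zero {μ : G.E → ℝ} (hμ : ∀ e, 0 < μ e) (hG : G.Connected)
    {v : G.V → ℝ} (hv : G.lap μ v = 0) : ∀ i j : G.V, v i = v j := by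
  have h0 : ∑ x : G.V, v x * G.lap μ v x = 0 := by
    rw [hv]; simp
  have h1 := lap_pairing μ v v
  rw [h0, mul_zero] at h1
  have hnn : ∀ o : G.OEdge, 0 ≤ (v o.src - v o.tgt) * ((v o.src - v o.tgt) / μ o.edge) := by
    intro o
    rw [mul_div_assoc']
    exact div_nonneg (mul_self_nonneg _) (hμ o.edge).le
  have hz : ∀ o : G.OEdge, (v o.src - v o.tgt) * ((v o.src - v o.tgt) / μ o.edge) = 0 := by
    intro o
    have := (Finset.sum_eq_zero_iff_of_nonneg (fun o _ => hnn o)).mp h1.symm o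
      (Finset.mem_univ o)
    exact this
  have hst : ∀ o : G.OEdge, v o.src = v o.tgt := by
    intro o
    have h2 := hz o
    rw [mul_div_assoc'] at h2
    rcases div_eq_zero_iff.mp h2 with h3 | h3
    · have := mul_self_eq_zero.mp h3; linarith
    · exact absurd h3 (hμ o.edge).ne'
  have hreach : ∀ (F : Set G.E) (i j : G.V), G.Reach F i j → v i = v j := by
    intro F i j h
    induction h with
    | rel i j h =>
        obtain ⟨e, -, he⟩ := h
        exact hst ⟨(e, i, j), he⟩
    | refl i => rfl
    | symm i j _ ih => exact ih.symm
    | trans i j k _ _ ih1 ih2 => exact ih1.trans ih2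
  exact fun i j => hreach Set.univ i j (hG i j)

lemma exists_lap_solution {μ : G.E → ℝ} (hμ : ∀ e, 0 < μ e) (hG : G.Connected)
    {A : G.V → ℝ} (hA : ∑ x : G.V, A x = 0) : ∃ v : G.V → ℝ, G.lap μ v = A := by
  classical
  set U : Submodule ℝ (G.V → ℝ) := LinearMap.ker (sumL (G := G)) with hU
  have hmaps : ∀ v ∈ U, lapL μ v ∈ U := by
    intro v _
    simp only [hU, LinearMap.mem_ker]
    exact sum_lap_zero μ v
  set e : U →ₗ[ℝ] U := (lapL μ).restrict hmaps with he
  have hinj : Function.Injective e := by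
    intro u₁ u₂ h12
    have hz : e (u₁ - u₂) = 0 := by rw [map_sub, h12, sub_self]
    have hlz : G.lap μ ((u₁ : G.V → ℝ) - (u₂ : G.V → ℝ)) = 0 := by
      have : ((e (u₁ - u₂) : U) : G.V → ℝ) = 0 := by rw [hz]; rfl
      rwa [LinearMap.restrict_apply] at this
    set w : G.V → ℝ := (u₁ : G.V → ℝ) - (u₂ : G.V → ℝ) with hwdef
    have hconst := const_of_lap_zero hμ hG hlz
    have hsum : ∑ x : G.V, w x = 0 := by
      have h1 : sumL (G := G) w = 0 := by
        rw [hwdef, map_sub]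
        have e1 : sumL (G := G) (u₁ : G.V → ℝ) = 0 := u₁.2
        have e2 : sumL (G := G) (u₂ : G.V → ℝ) = 0 := u₂.2
        rw [e1, e2, sub_self]
      exact h1
    have hw0 : w = 0 := by
      funext x
      have hcard : (Fintype.card G.V : ℝ) ≠ 0 := by
        have : Nonempty G.V := ⟨x⟩
        exact_mod_cast Fintype.card_ne_zero
      have h2 : ∑ y : G.V, w y = (Fintype.card G.V : ℝ) * w x := by
        rw [Finset.sum_congr rfl fun y _ => hconst y x]
        rw [Finset.sum_const, nsmul_eq_mul, Finset.card_univ]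
      rw [hsum] at h2
      have := (mul_eq_zero.mp h2.symm).resolve_left hcard
      simpa using this
    have : u₁ - u₂ = 0 := Subtype.ext hw0
    exact sub_eq_zero.mp this
  have hsurj : Function.Surjective e := (LinearMap.injective_iff_surjective).mp hinj
  have hAU : A ∈ U := by
    simp only [hU, LinearMap.mem_ker]
    exact hA
  obtain ⟨u, hu⟩ := hsurj ⟨A, hAU⟩
  refine ⟨(u : G.V → ℝ), ?_⟩
  have : ((e u : U) : G.V → ℝ) = A := by rw [hu]
  rwa [LinearMap.restrict_apply] at this

lemma green_eq {μ : G.E → ℝ} (hμ : ∀ e, 0 < μ e) (hG : G.Connected)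
    {A B v : G.V → ℝ} (hA : ∑ x : G.V, A x = 0) (hv : G.lap μ v = B) :
    G.green μ A B = ∑ x : G.V, A x * v x := by
  have hex : ∃ w, G.lap μ w = B := ⟨v, hv⟩
  rw [green, dif_pos hex]
  set w : G.V → ℝ := Classical.choose hex with hwdef
  have hw : G.lap μ w = B := Classical.choose_spec hex
  have hlz : G.lap μ (w - v) = 0 := by
    have h1 : lapL μ (w - v) = lapL μ w - lapL μ v := map_sub _ _ _
    simp only [lapL_apply] at h1
    rw [h1, hw, hv, sub_self]
  have hconst := const_of_lap_zero hμ hG hlz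
  rcases isEmpty_or_nonempty G.V with hemp | hne
  · simp
  · set i₀ : G.V := Classical.arbitrary G.V
    have hdiff : ∑ x : G.V, A x * w x - ∑ x : G.V, A x * v x
        = ∑ x : G.V, A x * ((w - v) x) := by
      rw [← Finset.sum_sub_distrib]
      exact Finset.sum_congr rfl fun x _ => by simp [Pi.sub_apply]; ring
    have hc : ∑ x : G.V, A x * ((w - v) x) = (∑ x : G.V, A x) * ((w - v) i₀) := by
      rw [Finset.sum_mul]
      exact Finset.sum_congr rfl fun x _ => by rw [hconst x i₀]
    rw [hA, zero_mul] at hc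
    rw [hc] at hdiff
    linarith [hdiff]

end RGraph
namespace RGraph

variable {G : RGraph}

/-- The set of achievable powers for currents consistent with `A`. -/
def curSet (A : G.V → ℝ) (μ : G.E → ℝ) : Set ℝ :=
  {p | ∃ I : G.OEdge → ℝ, G.IsCurrent I ∧ G.Consistent I A ∧ p = G.power μ I}

/-- The extended Green's quadratic form, via Thomson's principle. -/
noncomputable def QA (A : G.V → ℝ) (μ : G.E → ℝ) : ℝ := sInf (curSet (G := G) A μ)

lemma curSet_nonempty (hG : G.Connected) {A : G.V → ℝ} (hA : ∑ x : G.V, A x = 0)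
    (μ : G.E → ℝ) : (curSet (G := G) A μ).Nonempty := by
  obtain ⟨I, hI, hIc⟩ := exists_consistent_current hG hA
  exact ⟨G.power μ I, I, hI, hIc, rfl⟩

lemma curSet_bddBelow {μ : G.E → ℝ} (hμ : ∀ e, 0 ≤ μ e) (A : G.V → ℝ) :
    BddBelow (curSet (G := G) A μ) :=
  ⟨0, fun p hp => by obtain ⟨I, _, _, rfl⟩ := hp; exact power_nonneg hμ I⟩

lemma QA_le {μ : G.E → ℝ} (hμ : ∀ e, 0 ≤ μ e) {A : G.V → ℝ} {I : G.OEdge → ℝ}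
    (hI : G.IsCurrent I) (hIc : G.Consistent I A) :
    QA (G := G) A μ ≤ G.power μ I :=
  csInf_le (curSet_bddBelow hμ A) ⟨I, hI, hIc, rfl⟩

lemma QA_nonneg {μ : G.E → ℝ} (hμ : ∀ e, 0 ≤ μ e) (hG : G.Connected)
    {A : G.V → ℝ} (hA : ∑ x : G.V, A x = 0) : 0 ≤ QA (G := G) A μ :=
  le_csInf (curSet_nonempty hG hA μ)
    (fun p hp => by obtain ⟨I, _, _, rfl⟩ := hp; exact power_nonneg hμ I)

lemma QA_eq_green {μ : G.E → ℝ} (hμ : ∀ e, 0 < μ e) (hG : G.Connected)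
    {A : G.V → ℝ} (hA : ∑ x : G.V, A x = 0) :
    QA (G := G) A μ = G.green μ A A := by
  obtain ⟨v, hv⟩ := exists_lap_solution hμ hG hA
  rw [green_eq hμ hG hA hv]
  apply le_antisymm
  · have hmem : G.power μ (vCur μ v) ∈ curSet (G := G) A μ :=
      ⟨vCur μ v, isCurrent_vCur μ v, fun x => by rw [show (Finset.filter _ _).sum _ = dvg (vCur μ v) x from rfl, dvg_vCur, hv], rfl⟩
    have := csInf_le (curSet_bddBelow (fun e => (hμ e).le) A) hmem
    rwa [power_vCur hμ hv] at this
  · exact le_csInf (curSet_nonempty hG hA μ)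
      (fun p hp => by obtain ⟨I, hI, hIc, rfl⟩ := hp; exact power_ge hμ hv hI hIc)

end RGraph
namespace RGraph

variable {G : RGraph}

lemma power_le_power_add {μ ν : G.E → ℝ} {δ : ℝ} (h : ∀ e, μ e ≤ ν e + δ)
    (I : G.OEdge → ℝ) :
    G.power μ I ≤ G.power ν I + δ * ∑ e : G.E, (I (G.orient e)) ^ 2 := by
  unfold power
  rw [Finset.mul_sum, ← Finset.sum_add_distrib]
  refine Finset.sum_le_sum fun e _ => ?_
  have h1 := h e
  nlinarith [sq_nonneg (I (G.orient e))]

lemma QA_continuousOn (hG : G.Connected) {A : G.V → ℝ} (hA : ∑ x : G.V, A x = 0) :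
    ContinuousOn (QA (G := G) A) {μ : G.E → ℝ | ∀ e : G.E, 0 ≤ μ e} := by
  classical
  obtain ⟨I₀, hI₀, hI₀c⟩ := exists_consistent_current hG hA
  rw [Metric.continuousOn_iff]
  intro μ₀ hμ₀ ε hε
  -- a positive lower bound for the nonzero resistances at μ₀
  obtain ⟨m, hm0, hm⟩ : ∃ m, 0 < m ∧ ∀ e, μ₀ e ≠ 0 → m ≤ μ₀ e := by
    by_cases hc : (Finset.univ.filter (fun e : G.E => μ₀ e ≠ 0)).Nonempty
    · refine ⟨(Finset.univ.filter (fun e : G.E => μ₀ e ≠ 0)).inf' hc μ₀, ?_, ?_⟩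
      · rw [Finset.lt_inf'_iff]
        intro e he
        have := (Finset.mem_filter.mp he).2
        exact lt_of_le_of_ne (hμ₀ e) (Ne.symm this)
      · intro e he
        exact Finset.inf'_le μ₀ (Finset.mem_filter.mpr ⟨Finset.mem_univ e, he⟩)
    · refine ⟨1, one_pos, fun e he => absurd ?_ hc⟩
      exact ⟨e, Finset.mem_filter.mpr ⟨Finset.mem_univ e, he⟩⟩
  -- a near-optimal current at μ₀
  have hlt : sInf (curSet (G := G) A μ₀) < QA (G := G) A μ₀ + ε / 2 := by
    have h := QA_nonneg hμ₀ hG hA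
    unfold QA at h ⊢
    linarith
  obtain ⟨p₁, hp₁S, hp₁⟩ := exists_lt_of_csInf_lt (curSet_nonempty hG hA μ₀) hlt
  obtain ⟨I₁, hI₁, hI₁c, rfl⟩ := hp₁S
  set C₀ : ℝ := ∑ e : G.E, (I₀ (G.orient e)) ^ 2 with hC₀def
  have hC₀0 : 0 ≤ C₀ := Finset.sum_nonneg fun e _ => sq_nonneg _
  set C₁ : ℝ := ∑ e : G.E, (I₁ (G.orient e)) ^ 2 with hC₁def
  have hC₁0 : 0 ≤ C₁ := Finset.sum_nonneg fun e _ => sq_nonneg _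
  set B₀ : ℝ := G.power μ₀ I₀ + m * C₀ with hB₀def
  have hB₀0 : 0 ≤ B₀ := add_nonneg (power_nonneg hμ₀ I₀) (mul_nonneg hm0.le hC₀0)
  set δ : ℝ := min (m / 2) (min (ε / (2 * (C₁ + 1))) (ε * m / (4 * (B₀ + 1)))) with hδdef
  have hδ0 : 0 < δ := by
    apply lt_min (by positivity)
    exact lt_min (by positivity) (by positivity)
  refine ⟨δ, hδ0, ?_⟩
  intro μ hμS hdist
  have hμ : ∀ e, 0 ≤ μ e := hμS
  have hcomp : ∀ e, |μ e - μ₀ e| < δ := by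
    intro e
    have := (dist_pi_lt_iff hδ0).mp hdist e
    rwa [Real.dist_eq] at this
  have hδm : δ ≤ m / 2 := min_le_left _ _
  -- uniform bound for QA A μ
  have hQμB : QA (G := G) A μ ≤ B₀ := by
    refine le_trans (QA_le hμ hI₀ hI₀c) ?_
    have h1 : G.power μ I₀ ≤ G.power μ₀ I₀ + m * C₀ := by
      have h2 := power_le_power_add (μ := μ) (ν := μ₀) (δ := m)
        (fun e => by have := abs_lt.mp (hcomp e); linarith) I₀
      rw [← hC₀def] at h2
      exact h2
    rw [hB₀def]
    exact h1
  -- Part 1: QA A μ < QA A μ₀ + ε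
  have part1 : QA (G := G) A μ < QA (G := G) A μ₀ + ε := by
    have h1 : QA (G := G) A μ ≤ G.power μ I₁ := QA_le hμ hI₁ hI₁c
    have h2 : G.power μ I₁ ≤ G.power μ₀ I₁ + δ * C₁ := by
      have h3 := power_le_power_add (μ := μ) (ν := μ₀) (δ := δ)
        (fun e => by have := abs_lt.mp (hcomp e); linarith) I₁
      rwa [← hC₁def] at h3
    have hδ2 : δ ≤ ε / (2 * (C₁ + 1)) := le_trans (min_le_right _ _) (min_le_left _ _)
    have hδC : δ * C₁ ≤ ε / 2 := by
      have h4 : δ * C₁ ≤ (ε / (2 * (C₁ + 1))) * C₁ := mul_le_mul_of_nonneg_right hδ2 hC₁0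
      have h5 : (ε / (2 * (C₁ + 1))) * C₁ ≤ ε / 2 := by
        rw [div_mul_eq_mul_div, div_le_div_iff₀ (by positivity) (by norm_num)]
        nlinarith
      linarith
    linarith
  -- Part 2: QA A μ₀ < QA A μ + ε
  set η : ℝ := 2 * δ / m with hηdef
  have hη0 : 0 < η := by positivity
  have hkey : ∀ I : G.OEdge → ℝ, G.power μ₀ I ≤ (1 + η) * G.power μ I := by
    intro I
    unfold power
    rw [Finset.mul_sum]
    refine Finset.sum_le_sum fun e _ => ?_
    by_cases h : μ₀ e = 0
    · rw [h, zero_mul]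
      have h0 : 0 ≤ μ e * I (G.orient e) ^ 2 := mul_nonneg (hμ e) (sq_nonneg _)
      nlinarith [hη0.le]
    · have hme : m ≤ μ₀ e := hm e h
      have habs := abs_lt.mp (hcomp e)
      have h1 : m / 2 ≤ μ e := by linarith
      have h3 : δ ≤ η * μ e := by
        have h4 : (2 * δ / m) * (m / 2) = δ := by field_simp
        have h5 : (2 * δ / m) * (m / 2) ≤ (2 * δ / m) * μ e :=
          mul_le_mul_of_nonneg_left h1 (by positivity)
        rw [h4] at h5
        rw [hηdef]
        exact h5
      have h4 : μ₀ e ≤ (1 + η) * μ e := by nlinarith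
      nlinarith [sq_nonneg (I (G.orient e))]
  have hQ₀le : QA (G := G) A μ₀ ≤ (1 + η) * QA (G := G) A μ := by
    have hstep : ∀ p ∈ curSet (G := G) A μ, QA (G := G) A μ₀ / (1 + η) ≤ p := by
      rintro p ⟨I, hI, hIc, rfl⟩
      rw [div_le_iff₀ (by positivity)]
      calc QA (G := G) A μ₀ ≤ G.power μ₀ I := QA_le hμ₀ hI hIc
        _ ≤ (1 + η) * G.power μ I := hkey I
        _ = G.power μ I * (1 + η) := mul_comm _ _
    have h6 : QA (G := G) A μ₀ / (1 + η) ≤ QA (G := G) A μ :=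
      le_csInf (curSet_nonempty hG hA μ) hstep
    rw [div_le_iff₀ (by positivity)] at h6
    linarith [h6, mul_comm (QA (G := G) A μ) (1 + η)]
  have hηB : η * B₀ < ε := by
    have hδ3 : δ ≤ ε * m / (4 * (B₀ + 1)) := le_trans (min_le_right _ _) (min_le_right _ _)
    have h7 : η * B₀ = 2 * δ * B₀ / m := by rw [hηdef]; ring
    have h8 : 2 * δ * B₀ / m ≤ 2 * (ε * m / (4 * (B₀ + 1))) * B₀ / m := by
      gcongr
    have h9 : 2 * (ε * m / (4 * (B₀ + 1))) * B₀ / m = (ε * B₀) / (2 * (B₀ + 1)) := by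
      field_simp
      ring
    have h10 : (ε * B₀) / (2 * (B₀ + 1)) < ε := by
      rw [div_lt_iff₀ (by positivity)]
      nlinarith
    calc η * B₀ = 2 * δ * B₀ / m := h7
      _ ≤ 2 * (ε * m / (4 * (B₀ + 1))) * B₀ / m := h8
      _ = (ε * B₀) / (2 * (B₀ + 1)) := h9
      _ < ε := h10
  have part2 : QA (G := G) A μ₀ < QA (G := G) A μ + ε := by
    have h11 : (1 + η) * QA (G := G) A μ = QA (G := G) A μ + η * QA (G := G) A μ := by ring
    have h12 : η * QA (G := G) A μ ≤ η * B₀ := mul_le_mul_of_nonneg_left hQμB hη0.le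
    linarith
  rw [Real.dist_eq, abs_sub_lt_iff]
  constructor <;> linarith

end RGraph
theorem stmt13 (G : RGraph) (hG : G.Connected) (D E : G.V → ℝ)
    (hD : ∑ x : G.V, D x = 0) (hE : ∑ x : G.V, E x = 0) :
    ∃ g : (G.E → ℝ) → ℝ, ContinuousOn g {μ : G.E → ℝ | ∀ e : G.E, 0 ≤ μ e} ∧
      ∀ μ : G.E → ℝ, (∀ e : G.E, 0 < μ e) → g μ = G.green μ D E := by
  classical
  set Ap : G.V → ℝ := fun x => D x + E x with hApdef
  set Am : G.V → ℝ := fun x => D x - E x with hAmdef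
  have hApz : ∑ x : G.V, Ap x = 0 := by
    rw [hApdef]
    rw [Finset.sum_add_distrib, hD, hE, add_zero]
  have hAmz : ∑ x : G.V, Am x = 0 := by
    rw [hAmdef]
    rw [Finset.sum_sub_distrib, hD, hE, sub_zero]
  refine ⟨fun μ => (RGraph.QA (G := G) Ap μ - RGraph.QA (G := G) Am μ) / 4, ?_, ?_⟩
  · exact ((RGraph.QA_continuousOn hG hApz).sub (RGraph.QA_continuousOn hG hAmz)).div_const 4
  · intro μ hμ
    obtain ⟨vD, hvD⟩ := RGraph.exists_lap_solution hμ hG hD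
    obtain ⟨vE, hvE⟩ := RGraph.exists_lap_solution hμ hG hE
    have hvp : G.lap μ (fun x => vD x + vE x) = Ap := by
      have h := map_add (RGraph.lapL μ) vD vE
      simp only [RGraph.lapL_apply] at h
      rw [show (vD + vE : G.V → ℝ) = fun x => vD x + vE x from rfl] at h
      rw [h, hvD, hvE]
      funext x
      simp [hApdef]
    have hvm : G.lap μ (fun x => vD x - vE x) = Am := by
      have h := map_sub (RGraph.lapL μ) vD vE
      simp only [RGraph.lapL_apply] at h
      rw [show (vD - vE : G.V → ℝ) = fun x => vD x - vE x from rfl] at h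
      rw [h, hvD, hvE]
      funext x
      simp [hAmdef]
    have h1 : RGraph.QA (G := G) Ap μ = ∑ x : G.V, Ap x * (vD x + vE x) := by
      rw [RGraph.QA_eq_green hμ hG hApz, RGraph.green_eq hμ hG hApz hvp]
    have h2 : RGraph.QA (G := G) Am μ = ∑ x : G.V, Am x * (vD x - vE x) := by
      rw [RGraph.QA_eq_green hμ hG hAmz, RGraph.green_eq hμ hG hAmz hvm]
    have h3 : G.green μ D E = ∑ x : G.V, D x * vE x :=
      RGraph.green_eq hμ hG hD hvE
    have hsym : ∑ x : G.V, E x * vD x = ∑ x : G.V, D x * vE x := by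
      have ha : ∑ x : G.V, E x * vD x = ∑ x : G.V, vD x * G.lap μ vE x := by
        refine Finset.sum_congr rfl fun x _ => ?_
        rw [hvE, mul_comm]
      have hb : ∑ x : G.V, D x * vE x = ∑ x : G.V, vE x * G.lap μ vD x := by
        refine Finset.sum_congr rfl fun x _ => ?_
        rw [hvD, mul_comm]
      rw [ha, hb, RGraph.lap_sym]
    have hexp : ∑ x : G.V, Ap x * (vD x + vE x) - ∑ x : G.V, Am x * (vD x - vE x)
        = 2 * ∑ x : G.V, D x * vE x + 2 * ∑ x : G.V, E x * vD x := by
      rw [← Finset.sum_sub_distrib, Finset.mul_sum, Finset.mul_sum,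
        ← Finset.sum_add_distrib]
      refine Finset.sum_congr rfl fun x _ => ?_
      simp only [hApdef, hAmdef]
      ring
    show (RGraph.QA (G := G) Ap μ - RGraph.QA (G := G) Am μ) / 4 = G.green μ D E
    rw [h1, h2, h3]
    linarith
end

section
/- Let Γ be a connected graph, let D ∈ ℝ^{Vert(Γ)} be a zero-sum vector, let μ ∈ ℝ_{>0}^{Ed(Γ)} be a proper resistance, and let v ∈ ℝ^{Vert(Γ)} satisfy Lv = D. Then for every oriented edge e : i → j, the induced current satisfies |(v_i − v_j)/μ(e)| ≤ ‖D‖, where ‖D‖ = Σ_{i ∈ Vert(Γ)} max{0, D_i}. -/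
open Classical
open scoped BigOperators

lemma stmt14_aux (G : RGraph) (D : G.V → ℝ)
    (μ : G.E → ℝ) (hμ : ∀ e : G.E, 0 < μ e) (v : G.V → ℝ) (hv : G.lap μ v = D)
    (e : G.E) (i j : G.V) (he : G.ends e = s(i, j)) :
    (v i - v j) / μ e ≤ ∑ x : G.V, max 0 (D x) := by
  have hRHS : (0:ℝ) ≤ ∑ x : G.V, max 0 (D x) :=
    Finset.sum_nonneg fun x _ => le_max_left 0 (D x)
  rcases le_or_gt (v i) (v j) with h | h
  · have : (v i - v j) / μ e ≤ 0 := by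
      apply div_nonpos_of_nonpos_of_nonneg
      · linarith
      · exact (hμ e).le
    linarith
  · -- cut argument
    set A : Finset G.V := Finset.univ.filter (fun x => v j < v x) with hA
    have hiA : i ∈ A := by simp [hA, h]
    have hjA : j ∈ Aᶜ := by simp [hA]
    set g : G.V → G.V → ℝ := fun x y =>
      ∑ e' : G.E, if G.ends e' = s(x, y) then (v x - v y) / μ e' else 0 with hg
    have hg_anti : ∀ x y, g x y = - g y x := by
      intro x y
      simp only [hg]
      rw [← Finset.sum_neg_distrib]
      refine Finset.sum_congr rfl fun e' _ => ?_
      rw [show s(y, x) = s(x, y) from Sym2.eq_swap]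
      split_ifs <;> ring
    have hAA : ∑ x ∈ A, ∑ y ∈ A, g x y = 0 := by
      have h1 : ∑ x ∈ A, ∑ y ∈ A, g x y = ∑ x ∈ A, ∑ y ∈ A, - g y x :=
        Finset.sum_congr rfl fun x _ => Finset.sum_congr rfl fun y _ => hg_anti x y
      have h2 : ∑ x ∈ A, ∑ y ∈ A, - g y x = -(∑ x ∈ A, ∑ y ∈ A, g y x) := by
        simp [← Finset.sum_neg_distrib]
      have h3 : ∑ x ∈ A, ∑ y ∈ A, g y x = ∑ x ∈ A, ∑ y ∈ A, g x y := Finset.sum_comm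
      rw [h2, h3] at h1
      linarith
    have hg_nonneg : ∀ x ∈ A, ∀ y ∈ Aᶜ, 0 ≤ g x y := by
      intro x hx y hy
      have hx' : v j < v x := by simpa [hA] using hx
      have hy' : ¬ v j < v y := by simpa [hA] using hy
      refine Finset.sum_nonneg fun e' _ => ?_
      split_ifs
      · exact div_nonneg (by linarith [not_lt.1 hy']) (hμ e').le
      · exact le_refl 0
    have hsplit : ∑ x ∈ A, D x = ∑ x ∈ A, ∑ y ∈ Aᶜ, g x y := by
      have hlap : ∀ x, D x = ∑ y : G.V, g x y := by
        intro x
        rw [← hv]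
        rfl
      calc ∑ x ∈ A, D x = ∑ x ∈ A, ∑ y : G.V, g x y :=
            Finset.sum_congr rfl fun x _ => hlap x
        _ = ∑ x ∈ A, (∑ y ∈ A, g x y + ∑ y ∈ Aᶜ, g x y) :=
            Finset.sum_congr rfl fun x _ => (Finset.sum_add_sum_compl A _).symm
        _ = (∑ x ∈ A, ∑ y ∈ A, g x y) + ∑ x ∈ A, ∑ y ∈ Aᶜ, g x y :=
            Finset.sum_add_distrib
        _ = ∑ x ∈ A, ∑ y ∈ Aᶜ, g x y := by rw [hAA]; ring
    have hgij : (v i - v j) / μ e ≤ g i j := by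
      have hnn : ∀ e' ∈ Finset.univ (α := G.E),
          0 ≤ (if G.ends e' = s(i, j) then (v i - v j) / μ e' else 0) := by
        intro e' _
        split_ifs
        · exact div_nonneg (by linarith) (hμ e').le
        · exact le_refl 0
      have := Finset.single_le_sum hnn (Finset.mem_univ e)
      simpa [he] using this
    have hinner : g i j ≤ ∑ y ∈ Aᶜ, g i y :=
      Finset.single_le_sum (fun y hy => hg_nonneg i hiA y hy) hjA
    have houter : ∑ y ∈ Aᶜ, g i y ≤ ∑ x ∈ A, ∑ y ∈ Aᶜ, g x y :=
      Finset.single_le_sum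
        (fun x hx => Finset.sum_nonneg fun y hy => hg_nonneg x hx y hy) hiA
    have hbound : ∑ x ∈ A, D x ≤ ∑ x : G.V, max 0 (D x) :=
      calc ∑ x ∈ A, D x ≤ ∑ x ∈ A, max 0 (D x) :=
            Finset.sum_le_sum fun x _ => le_max_right 0 (D x)
        _ ≤ ∑ x : G.V, max 0 (D x) :=
            Finset.sum_le_sum_of_subset_of_nonneg (Finset.subset_univ A)
              (fun x _ _ => le_max_left 0 (D x))
    linarith [hsplit ▸ hbound]

theorem stmt14 (G : RGraph) (hG : G.Connected) (D : G.V → ℝ) (hD : ∑ x : G.V, D x = 0)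
    (μ : G.E → ℝ) (hμ : ∀ e : G.E, 0 < μ e) (v : G.V → ℝ) (hv : G.lap μ v = D)
    (e : G.E) (i j : G.V) (he : G.ends e = s(i, j)) :
    |(v i - v j) / μ e| ≤ ∑ x : G.V, max 0 (D x) := by
  rw [abs_le]
  constructor
  · have := stmt14_aux G D μ hμ v hv e j i (he.trans Sym2.eq_swap)
    have hne : μ e ≠ 0 := (hμ e).ne'
    have : -((v i - v j) / μ e) ≤ ∑ x : G.V, max 0 (D x) := by
      rw [← neg_div]
      simpa [neg_sub] using this
    linarith
  · exact stmt14_aux G D μ hμ v hv e i j he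
end

section
/- Let Γ be a connected graph and let D ∈ ℝ^{Vert(Γ)} be a zero-sum vector. Then for all μ₁, …, μ_n ∈ ℝ_{>0}^{Ed(Γ)} one has 0 ≤ g(Γ, Σ_{j=1}^n μ_j; D, D) − Σ_{j=1}^n g(Γ, μ_j; D, D) ≤ ‖D‖² · min_{i ∈ {1,…,n}} Σ_{j ≠ i} |μ_j|₁. -/
open Classical
open scoped BigOperators

section AuxStmt15

variable (G : RGraph)

/-- The three-fold sum `Σ_x Σ_y Σ_e [ends e = s(x,y)] c(e) (u x − u y)(z x − z y)`,
which equals twice the Dirichlet-type bilinear form with edge weights `c`. -/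
noncomputable def Tsum (c : G.E → ℝ) (u z : G.V → ℝ) : ℝ :=
  ∑ x : G.V, ∑ y : G.V, ∑ e : G.E,
    if G.ends e = s(x, y) then c e * (u x - u y) * (z x - z y) else 0

variable {G}

lemma Tsum_lap (μ : G.E → ℝ) (u z : G.V → ℝ) :
    Tsum G (fun e => (μ e)⁻¹) u z = 2 * ∑ x : G.V, z x * G.lap μ u x := by
  have h1 : ∑ x : G.V, z x * G.lap μ u x
      = ∑ x : G.V, ∑ y : G.V, ∑ e : G.E,
        if G.ends e = s(x, y) then (μ e)⁻¹ * (u x - u y) * z x else 0 := by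
    refine Finset.sum_congr rfl fun x _ => ?_
    unfold RGraph.lap
    rw [Finset.mul_sum]
    refine Finset.sum_congr rfl fun y _ => ?_
    rw [Finset.mul_sum]
    refine Finset.sum_congr rfl fun e _ => ?_
    split_ifs with h
    · ring
    · exact mul_zero _
  have h2 : ∑ x : G.V, z x * G.lap μ u x
      = ∑ x : G.V, ∑ y : G.V, ∑ e : G.E,
        if G.ends e = s(x, y) then (μ e)⁻¹ * (u y - u x) * z y else 0 := by
    rw [h1, Finset.sum_comm]
    refine Finset.sum_congr rfl fun x _ => Finset.sum_congr rfl fun y _ =>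
      Finset.sum_congr rfl fun e _ => ?_
    rw [Sym2.eq_swap]
  rw [two_mul]
  nth_rewrite 1 [h1]
  rw [h2]
  unfold Tsum
  rw [← Finset.sum_add_distrib]
  refine Finset.sum_congr rfl fun x _ => ?_
  rw [← Finset.sum_add_distrib]
  refine Finset.sum_congr rfl fun y _ => ?_
  rw [← Finset.sum_add_distrib]
  refine Finset.sum_congr rfl fun e _ => ?_
  split_ifs with h
  · ring
  · rw [add_zero]

lemma Tsum_add (c c' : G.E → ℝ) (u z : G.V → ℝ) :
    Tsum G (fun e => c e + c' e) u z = Tsum G c u z + Tsum G c' u z := by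
  unfold Tsum
  rw [← Finset.sum_add_distrib]
  refine Finset.sum_congr rfl fun x _ => ?_
  rw [← Finset.sum_add_distrib]
  refine Finset.sum_congr rfl fun y _ => ?_
  rw [← Finset.sum_add_distrib]
  refine Finset.sum_congr rfl fun e _ => ?_
  split_ifs with h
  · ring
  · rw [add_zero]

lemma Tsum_sum {ι : Type} (S : Finset ι) (c : ι → G.E → ℝ) (u z : G.V → ℝ) :
    Tsum G (fun e => ∑ l ∈ S, c l e) u z = ∑ l ∈ S, Tsum G (c l) u z := by
  unfold Tsum
  calc ∑ x : G.V, ∑ y : G.V, ∑ e : G.E,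
        (if G.ends e = s(x, y) then (∑ l ∈ S, c l e) * (u x - u y) * (z x - z y) else 0)
      = ∑ x : G.V, ∑ y : G.V, ∑ e : G.E, ∑ l ∈ S,
        (if G.ends e = s(x, y) then c l e * (u x - u y) * (z x - z y) else 0) := by
        refine Finset.sum_congr rfl fun x _ => Finset.sum_congr rfl fun y _ =>
          Finset.sum_congr rfl fun e _ => ?_
        split_ifs with h
        · rw [Finset.sum_mul, Finset.sum_mul]
        · simp
    _ = ∑ x : G.V, ∑ y : G.V, ∑ l ∈ S, ∑ e : G.E,
        (if G.ends e = s(x, y) then c l e * (u x - u y) * (z x - z y) else 0) := by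
        refine Finset.sum_congr rfl fun x _ => Finset.sum_congr rfl fun y _ => Finset.sum_comm
    _ = ∑ x : G.V, ∑ l ∈ S, ∑ y : G.V, ∑ e : G.E,
        (if G.ends e = s(x, y) then c l e * (u x - u y) * (z x - z y) else 0) := by
        refine Finset.sum_congr rfl fun x _ => Finset.sum_comm
    _ = ∑ l ∈ S, ∑ x : G.V, ∑ y : G.V, ∑ e : G.E,
        (if G.ends e = s(x, y) then c l e * (u x - u y) * (z x - z y) else 0) :=
        Finset.sum_comm

lemma Tsum_nonneg (c : G.E → ℝ) (hc : ∀ e, 0 ≤ c e) (u : G.V → ℝ) :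
    0 ≤ Tsum G c u u := by
  refine Finset.sum_nonneg fun x _ => Finset.sum_nonneg fun y _ =>
    Finset.sum_nonneg fun e _ => ?_
  split_ifs with h
  · have := mul_nonneg (hc e) (mul_self_nonneg (u x - u y))
    nlinarith [this]
  · exact le_rfl

lemma Tsum_cs (a b c : G.E → ℝ) (ha : ∀ e, 0 < a e) (hb : ∀ e, 0 ≤ b e)
    (hab : ∀ e, (c e) ^ 2 ≤ a e * b e) (u z : G.V → ℝ) :
    2 * Tsum G c u z ≤ Tsum G a u u + Tsum G b z z := by
  unfold Tsum
  rw [Finset.mul_sum, ← Finset.sum_add_distrib]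
  refine Finset.sum_le_sum fun x _ => ?_
  rw [Finset.mul_sum, ← Finset.sum_add_distrib]
  refine Finset.sum_le_sum fun y _ => ?_
  rw [Finset.mul_sum, ← Finset.sum_add_distrib]
  refine Finset.sum_le_sum fun e _ => ?_
  split_ifs with h
  · nlinarith [sq_nonneg (a e * (u x - u y) - c e * (z x - z y)), ha e, hb e, hab e,
      mul_nonneg (sub_nonneg.2 (hab e)) (sq_nonneg (z x - z y))]
  · simp

lemma pair_count {G : RGraph} (z : Sym2 G.V) (r : ℝ) (hr : 0 ≤ r) :
    (∑ x : G.V, ∑ y : G.V, if z = s(x, y) then r else 0) ≤ 2 * r := by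
  induction z using Sym2.ind with
  | _ a b =>
    have key : ∀ x y : G.V, (if s(a, b) = s(x, y) then r else 0)
        ≤ (if x = a ∧ y = b then r else 0) + (if x = b ∧ y = a then r else 0) := by
      intro x y
      by_cases h : s(a, b) = s(x, y)
      · rw [if_pos h]
        have hor : (x = a ∧ y = b) ∨ (x = b ∧ y = a) := by
          obtain ⟨h1, h2⟩ | ⟨h1, h2⟩ := Sym2.eq_iff.mp h
          · exact Or.inl ⟨h1.symm, h2.symm⟩
          · exact Or.inr ⟨h2.symm, h1.symm⟩
        rcases hor with hc | hc
        · rw [if_pos hc]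
          split_ifs <;> linarith
        · rw [if_pos hc]
          split_ifs <;> linarith
      · rw [if_neg h, if_neg, if_neg]
        · linarith
        · rintro ⟨rfl, rfl⟩
          exact h (Sym2.eq_swap)
        · rintro ⟨rfl, rfl⟩
          exact h rfl
    calc (∑ x : G.V, ∑ y : G.V, if s(a, b) = s(x, y) then r else 0)
        ≤ ∑ x : G.V, ∑ y : G.V,
            ((if x = a ∧ y = b then r else 0) + (if x = b ∧ y = a then r else 0)) :=
          Finset.sum_le_sum fun x _ => Finset.sum_le_sum fun y _ => key x y
      _ = (∑ x : G.V, ∑ y : G.V, if x = a ∧ y = b then r else 0)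
          + ∑ x : G.V, ∑ y : G.V, (if x = b ∧ y = a then r else 0) := by
          rw [← Finset.sum_add_distrib]
          exact Finset.sum_congr rfl fun x _ => Finset.sum_add_distrib
      _ = 2 * r := by
          have e1 : ∀ (a b : G.V), (∑ x : G.V, ∑ y : G.V, if x = a ∧ y = b then r else 0) = r := by
            intro a b
            simp [ite_and, Finset.sum_ite_eq]
          rw [e1 a b, e1 b a]
          ring
      
lemma cut_bound {G : RGraph} (μ : G.E → ℝ) (hμ : ∀ e, 0 < μ e) (u D : G.V → ℝ)
    (hu : G.lap μ u = D) (e0 : G.E) (x0 y0 : G.V) (h0 : G.ends e0 = s(x0, y0)) :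
    (u x0 - u y0) / μ e0 ≤ ∑ x : G.V, max 0 (D x) := by
  classical
  have hRnn : (0 : ℝ) ≤ ∑ x : G.V, max 0 (D x) :=
    Finset.sum_nonneg fun x _ => le_max_left _ _
  by_cases hxy : u x0 ≤ u y0
  · refine le_trans ?_ hRnn
    exact div_nonpos_of_nonpos_of_nonneg (by linarith) (hμ e0).le
  · push_neg at hxy
    set A : Finset G.V := Finset.univ.filter (fun x => u y0 < u x) with hA
    set B : Finset G.V := Finset.univ.filter (fun x => ¬ u y0 < u x) with hB
    have hx0A : x0 ∈ A := by simp [hA, hxy]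
    have hy0B : y0 ∈ B := by simp [hB]
    have hsplit : ∀ x : G.V, G.lap μ u x
        = (∑ y ∈ A, ∑ e : G.E, if G.ends e = s(x, y) then (u x - u y) / μ e else 0)
        + (∑ y ∈ B, ∑ e : G.E, if G.ends e = s(x, y) then (u x - u y) / μ e else 0) := by
      intro x
      unfold RGraph.lap
      rw [← Finset.sum_filter_add_sum_filter_not Finset.univ (fun y => u y0 < u y)]
    have hneg : ∀ x y : G.V,
        (∑ e : G.E, if G.ends e = s(x, y) then (u x - u y) / μ e else 0)
        = - ∑ e : G.E, (if G.ends e = s(y, x) then (u y - u x) / μ e else 0) := by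
      intro x y
      rw [← Finset.sum_neg_distrib]
      refine Finset.sum_congr rfl fun e _ => ?_
      rw [Sym2.eq_swap]
      split_ifs with h
      · ring
      · simp
    have hzero : (∑ x ∈ A, ∑ y ∈ A, ∑ e : G.E,
        if G.ends e = s(x, y) then (u x - u y) / μ e else 0) = 0 := by
      have hrev : (∑ x ∈ A, ∑ y ∈ A, ∑ e : G.E,
          if G.ends e = s(x, y) then (u x - u y) / μ e else 0)
          = - ∑ x ∈ A, ∑ y ∈ A, ∑ e : G.E,
            (if G.ends e = s(x, y) then (u x - u y) / μ e else 0) := by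
        nth_rewrite 1 [Finset.sum_comm]
        rw [← Finset.sum_neg_distrib]
        refine Finset.sum_congr rfl fun x _ => ?_
        rw [← Finset.sum_neg_distrib]
        refine Finset.sum_congr rfl fun y _ => ?_
        exact hneg y x
      linarith
    have hkey : ∑ x ∈ A, D x
        = ∑ x ∈ A, ∑ y ∈ B, ∑ e : G.E,
          (if G.ends e = s(x, y) then (u x - u y) / μ e else 0) := by
      calc ∑ x ∈ A, D x = ∑ x ∈ A, G.lap μ u x := by rw [← hu]
        _ = (∑ x ∈ A, ∑ y ∈ A, ∑ e : G.E,
              (if G.ends e = s(x, y) then (u x - u y) / μ e else 0))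
          + ∑ x ∈ A, ∑ y ∈ B, ∑ e : G.E,
              (if G.ends e = s(x, y) then (u x - u y) / μ e else 0) := by
            rw [← Finset.sum_add_distrib]
            exact Finset.sum_congr rfl fun x _ => hsplit x
        _ = ∑ x ∈ A, ∑ y ∈ B, ∑ e : G.E,
              (if G.ends e = s(x, y) then (u x - u y) / μ e else 0) := by
            rw [hzero, zero_add]
    have hnn : ∀ x ∈ A, ∀ y ∈ B, ∀ e : G.E,
        (0 : ℝ) ≤ (if G.ends e = s(x, y) then (u x - u y) / μ e else 0) := by
      intro x hx y hy e
      have hx' : u y0 < u x := by simpa [hA] using hx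
      have hy' : ¬ u y0 < u y := by simpa [hB] using hy
      push_neg at hy'
      split_ifs
      · exact div_nonneg (by linarith) (hμ e).le
      · exact le_rfl
    have h1 : (u x0 - u y0) / μ e0
        ≤ ∑ e : G.E, (if G.ends e = s(x0, y0) then (u x0 - u y0) / μ e else 0) := by
      have := Finset.single_le_sum
        (f := fun e : G.E => if G.ends e = s(x0, y0) then (u x0 - u y0) / μ e else 0)
        (fun e _ => hnn x0 hx0A y0 hy0B e) (Finset.mem_univ e0)
      simpa [h0] using this
    have h2 : (∑ e : G.E, (if G.ends e = s(x0, y0) then (u x0 - u y0) / μ e else 0))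
        ≤ ∑ y ∈ B, ∑ e : G.E, (if G.ends e = s(x0, y) then (u x0 - u y) / μ e else 0) :=
      Finset.single_le_sum
        (f := fun y => ∑ e : G.E, (if G.ends e = s(x0, y) then (u x0 - u y) / μ e else 0))
        (fun y hy => Finset.sum_nonneg fun e _ => hnn x0 hx0A y hy e) hy0B
    have h3 : (∑ y ∈ B, ∑ e : G.E, (if G.ends e = s(x0, y) then (u x0 - u y) / μ e else 0))
        ≤ ∑ x ∈ A, ∑ y ∈ B, ∑ e : G.E,
          (if G.ends e = s(x, y) then (u x - u y) / μ e else 0) :=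
      Finset.single_le_sum
        (f := fun x => ∑ y ∈ B, ∑ e : G.E,
          (if G.ends e = s(x, y) then (u x - u y) / μ e else 0))
        (fun x hx => Finset.sum_nonneg fun y hy => Finset.sum_nonneg fun e _ => hnn x hx y hy e)
        hx0A
    have h4 : ∑ x ∈ A, D x ≤ ∑ x : G.V, max 0 (D x) := by
      calc ∑ x ∈ A, D x ≤ ∑ x ∈ A, max 0 (D x) :=
            Finset.sum_le_sum fun x _ => le_max_right _ _
        _ ≤ ∑ x : G.V, max 0 (D x) := by
            rw [hA]
            exact Finset.sum_le_sum_of_subset_of_nonneg (Finset.filter_subset _ _)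
              (fun x _ _ => le_max_left _ _)
    linarith

end AuxStmt15

theorem stmt15 (G : RGraph) (hG : G.Connected) (D : G.V → ℝ) (hD : ∑ x : G.V, D x = 0)
    (n : ℕ) (hn : 0 < n) (μ : Fin n → G.E → ℝ) (hμ : ∀ (k : Fin n) (e : G.E), 0 < μ k e)
    (v : G.V → ℝ) (hv : G.lap (fun e => ∑ k : Fin n, μ k e) v = D)
    (w : Fin n → G.V → ℝ) (hw : ∀ k : Fin n, G.lap (μ k) (w k) = D) :
    0 ≤ (∑ x : G.V, D x * v x) - (∑ k : Fin n, ∑ x : G.V, D x * w k x) ∧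
    (∑ x : G.V, D x * v x) - (∑ k : Fin n, ∑ x : G.V, D x * w k x) ≤
      (∑ x : G.V, max 0 (D x)) ^ 2 *
        Finset.univ.inf' ⟨⟨0, hn⟩, Finset.mem_univ _⟩
          (fun k : Fin n => ∑ l ∈ Finset.univ.erase k, ∑ e : G.E, μ l e) := by
    classical
  have hs : ∀ e : G.E, 0 < ∑ k : Fin n, μ k e := fun e =>
    Finset.sum_pos (fun k _ => hμ k e) ⟨⟨0, hn⟩, Finset.mem_univ _⟩
  have hN : (0 : ℝ) ≤ ∑ x : G.V, max 0 (D x) :=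
    Finset.sum_nonneg fun x _ => le_max_left _ _
  have hvT : Tsum G (fun e => (∑ k : Fin n, μ k e)⁻¹) v v = 2 * ∑ x : G.V, D x * v x := by
    rw [Tsum_lap (fun e => ∑ k : Fin n, μ k e) v v, hv]
    congr 1
    exact Finset.sum_congr rfl fun x _ => mul_comm _ _
  have hwT : ∀ k : Fin n,
      Tsum G (fun e => (μ k e)⁻¹) (w k) (w k) = 2 * ∑ x : G.V, D x * w k x := by
    intro k
    rw [Tsum_lap (μ k) (w k) (w k), hw k]
    congr 1
    exact Finset.sum_congr rfl fun x _ => mul_comm _ _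
  have hvwT : ∀ k : Fin n,
      Tsum G (fun e => (∑ k : Fin n, μ k e)⁻¹) v (w k) = 2 * ∑ x : G.V, D x * w k x := by
    intro k
    rw [Tsum_lap (fun e => ∑ k : Fin n, μ k e) v (w k), hv]
    congr 1
    exact Finset.sum_congr rfl fun x _ => mul_comm _ _
  have hwvT : ∀ k : Fin n,
      Tsum G (fun e => (μ k e)⁻¹) (w k) v = 2 * ∑ x : G.V, D x * v x := by
    intro k
    rw [Tsum_lap (μ k) (w k) v, hw k]
    congr 1
    exact Finset.sum_congr rfl fun x _ => mul_comm _ _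
  have hg0 : ∀ k : Fin n, 0 ≤ ∑ x : G.V, D x * w k x := by
    intro k
    have h := Tsum_nonneg (G := G) (fun e => (μ k e)⁻¹)
      (fun e => inv_nonneg.2 (hμ k e).le) (w k)
    rw [hwT k] at h
    linarith
  -- lower bound
  have lower : ∑ k : Fin n, ∑ x : G.V, D x * w k x ≤ ∑ x : G.V, D x * v x := by
    have step : ∀ k : Fin n, 2 * (∑ x : G.V, D x * w k x)
        ≤ Tsum G (fun e => μ k e * ((∑ k : Fin n, μ k e)⁻¹) ^ 2) v v := by
      intro k
      have cs := Tsum_cs (G := G) (fun e => μ k e * ((∑ k : Fin n, μ k e)⁻¹) ^ 2)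
        (fun e => (μ k e)⁻¹) (fun e => (∑ k : Fin n, μ k e)⁻¹)
        (fun e => mul_pos (hμ k e) (pow_pos (inv_pos.2 (hs e)) 2))
        (fun e => inv_nonneg.2 (hμ k e).le)
        (fun e => le_of_eq (by
          have h1 := (hs e).ne'
          have h2 := (hμ k e).ne'
          field_simp
          try ring))
        v (w k)
      rw [hvwT k, hwT k] at cs
      linarith
    have hsum := Finset.sum_le_sum fun k (_ : k ∈ (Finset.univ : Finset (Fin n))) => step k
    rw [← Tsum_sum] at hsum
    have hfold : Tsum G (fun e => ∑ k : Fin n, μ k e * ((∑ k : Fin n, μ k e)⁻¹) ^ 2) v v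
        = Tsum G (fun e => (∑ k : Fin n, μ k e)⁻¹) v v := by
      congr 1
      funext e
      rw [← Finset.sum_mul]
      have h1 := (hs e).ne'
      field_simp
      try ring
    rw [hfold, hvT, ← Finset.mul_sum] at hsum
    linarith
  -- upper bound
  have upper : ∀ k : Fin n, (∑ x : G.V, D x * v x) - (∑ l : Fin n, ∑ x : G.V, D x * w l x)
      ≤ (∑ x : G.V, max 0 (D x)) ^ 2 * ∑ l ∈ Finset.univ.erase k, ∑ e : G.E, μ l e := by
    intro k
    have hJ : ∀ (e : G.E) (x y : G.V), G.ends e = s(x, y) →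
        ((w k x - w k y) * (μ k e)⁻¹) ^ 2 ≤ (∑ x : G.V, max 0 (D x)) ^ 2 := by
      intro e x y hxy
      have h1 := cut_bound (μ k) (hμ k) (w k) D (hw k) e x y hxy
      have h2 := cut_bound (μ k) (hμ k) (w k) D (hw k) e y x (hxy.trans Sym2.eq_swap)
      rw [div_eq_mul_inv] at h1 h2
      refine sq_le_sq' ?_ h1
      have heq : (w k y - w k x) * (μ k e)⁻¹ = -((w k x - w k y) * (μ k e)⁻¹) := by ring
      rw [heq] at h2
      linarith
    have hTl : ∀ l : Fin n, Tsum G (fun e => μ l e * ((μ k e)⁻¹) ^ 2) (w k) (w k)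
        ≤ 2 * ((∑ x : G.V, max 0 (D x)) ^ 2 * ∑ e : G.E, μ l e) := by
      intro l
      calc Tsum G (fun e => μ l e * ((μ k e)⁻¹) ^ 2) (w k) (w k)
          ≤ ∑ x : G.V, ∑ y : G.V, ∑ e : G.E,
            (if G.ends e = s(x, y) then μ l e * (∑ x : G.V, max 0 (D x)) ^ 2 else 0) := by
            unfold Tsum
            refine Finset.sum_le_sum fun x _ => Finset.sum_le_sum fun y _ =>
              Finset.sum_le_sum fun e _ => ?_
            split_ifs with h
            · have heq : μ l e * ((μ k e)⁻¹) ^ 2 * (w k x - w k y) * (w k x - w k y)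
                  = μ l e * ((w k x - w k y) * (μ k e)⁻¹) ^ 2 := by ring
              rw [heq]
              exact mul_le_mul_of_nonneg_left (hJ e x y h) (hμ l e).le
            · exact le_rfl
        _ = ∑ e : G.E, ∑ x : G.V, ∑ y : G.V,
            (if G.ends e = s(x, y) then μ l e * (∑ x : G.V, max 0 (D x)) ^ 2 else 0) := by
            exact (Finset.sum_congr rfl fun x _ => Finset.sum_comm).trans Finset.sum_comm
        _ ≤ ∑ e : G.E, 2 * (μ l e * (∑ x : G.V, max 0 (D x)) ^ 2) :=
            Finset.sum_le_sum fun e _ =>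
              pair_count (G.ends e) _ (mul_nonneg (hμ l e).le (sq_nonneg _))
        _ = 2 * ((∑ x : G.V, max 0 (D x)) ^ 2 * ∑ e : G.E, μ l e) := by
            rw [Finset.mul_sum, Finset.mul_sum]
            exact Finset.sum_congr rfl fun e _ => by ring
    have cs := Tsum_cs (G := G) (fun e => (∑ k' : Fin n, μ k' e) * ((μ k e)⁻¹) ^ 2)
      (fun e => (∑ k' : Fin n, μ k' e)⁻¹) (fun e => (μ k e)⁻¹)
      (fun e => mul_pos (hs e) (pow_pos (inv_pos.2 (hμ k e)) 2))
      (fun e => (inv_nonneg.2 (hs e).le))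
      (fun e => le_of_eq (by
        have h1 := (hs e).ne'
        have h2 := (hμ k e).ne'
        field_simp
        try ring))
      (w k) v
    rw [hwvT k, hvT] at cs
    have hdecomp : Tsum G (fun e => (∑ k' : Fin n, μ k' e) * ((μ k e)⁻¹) ^ 2) (w k) (w k)
        = Tsum G (fun e => (μ k e)⁻¹) (w k) (w k)
          + ∑ l ∈ Finset.univ.erase k,
            Tsum G (fun e => μ l e * ((μ k e)⁻¹) ^ 2) (w k) (w k) := by
      rw [← Tsum_sum, ← Tsum_add]
      congr 1
      funext e
      have h1 : ∑ k' : Fin n, μ k' e = μ k e + ∑ l ∈ Finset.univ.erase k, μ l e :=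
        (Finset.add_sum_erase Finset.univ (fun l => μ l e) (Finset.mem_univ k)).symm
      have h2 := (hμ k e).ne'
      rw [h1, ← Finset.sum_mul, add_mul]
      have h3 : μ k e * ((μ k e)⁻¹) ^ 2 = (μ k e)⁻¹ := by
        rw [sq, ← mul_assoc, mul_inv_cancel₀ h2, one_mul]
      rw [h3]
    have hsum2 : ∑ l ∈ Finset.univ.erase k,
        Tsum G (fun e => μ l e * ((μ k e)⁻¹) ^ 2) (w k) (w k)
        ≤ ∑ l ∈ Finset.univ.erase k,
          2 * ((∑ x : G.V, max 0 (D x)) ^ 2 * ∑ e : G.E, μ l e) :=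
      Finset.sum_le_sum fun l _ => hTl l
    have hflat : ∑ l ∈ Finset.univ.erase k,
        2 * ((∑ x : G.V, max 0 (D x)) ^ 2 * ∑ e : G.E, μ l e)
        = 2 * ((∑ x : G.V, max 0 (D x)) ^ 2 * ∑ l ∈ Finset.univ.erase k, ∑ e : G.E, μ l e) := by
      rw [Finset.mul_sum, Finset.mul_sum]
    have hgerase : 0 ≤ ∑ l ∈ Finset.univ.erase k, ∑ x : G.V, D x * w l x :=
      Finset.sum_nonneg fun l _ => hg0 l
    have hsplitg : ∑ l : Fin n, ∑ x : G.V, D x * w l x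
        = (∑ x : G.V, D x * w k x) + ∑ l ∈ Finset.univ.erase k, ∑ x : G.V, D x * w l x :=
      (Finset.add_sum_erase Finset.univ (fun l => ∑ x : G.V, D x * w l x)
        (Finset.mem_univ k)).symm
    have hwTk := hwT k
    linarith
  constructor
  · linarith
  · obtain ⟨k0, -, hk0⟩ := Finset.exists_mem_eq_inf'
      (⟨⟨0, hn⟩, Finset.mem_univ _⟩ : (Finset.univ : Finset (Fin n)).Nonempty)
      (fun k : Fin n => ∑ l ∈ Finset.univ.erase k, ∑ e : G.E, μ l e)
    rw [hk0]
    exact upper k0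
end

section
/- Let Γ be a connected graph and let D, E ∈ ℝ^{Vert(Γ)} be zero-sum vectors. Then for all μ₁, …, μ_n ∈ ℝ_{>0}^{Ed(Γ)} one has |g(Γ, Σ_{i=1}^n μ_i; D, E) − Σ_{i=1}^n g(Γ, μ_i; D, E)| ≤ ‖D‖ · ‖E‖ · min_{i ∈ {1,…,n}} Σ_{j ≠ i} |μ_j|₁. -/
open Classical
open scoped BigOperators

namespace Stmt16
open Finset

variable (G : RGraph)

noncomputable def glap (c : G.E → ℝ) (v : G.V → ℝ) : G.V → ℝ := fun i =>
  ∑ j : G.V, ∑ e : G.E, if G.ends e = s(i, j) then c e * (v i - v j) else 0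

noncomputable def qf (c : G.E → ℝ) (u v : G.V → ℝ) : ℝ :=
  ∑ i : G.V, ∑ j : G.V, ∑ e : G.E,
    if G.ends e = s(i, j) then c e * (u i - u j) * (v i - v j) else 0

lemma lap_eq_glap (μ : G.E → ℝ) (v : G.V → ℝ) :
    G.lap μ v = glap G (fun e => (μ e)⁻¹) v := by
  funext i
  refine Finset.sum_congr rfl fun j _ => Finset.sum_congr rfl fun e _ => ?_
  split_ifs with h
  · rw [div_eq_inv_mul]
  · rfl

lemma swap_key (c : G.E → ℝ) (f : G.V → G.V → ℝ) :
    (∑ i : G.V, ∑ j : G.V, ∑ e : G.E, if G.ends e = s(i, j) then c e * f i j else 0)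
      = ∑ i : G.V, ∑ j : G.V, ∑ e : G.E, if G.ends e = s(i, j) then c e * f j i else 0 := by
  rw [Finset.sum_comm]
  refine Finset.sum_congr rfl fun i _ => Finset.sum_congr rfl fun j _ =>
    Finset.sum_congr rfl fun e _ => ?_
  rw [Sym2.eq_swap]

lemma triple_sub (f g : G.V → G.V → G.E → ℝ) :
    ((∑ i : G.V, ∑ j : G.V, ∑ e : G.E, f i j e) - ∑ i : G.V, ∑ j : G.V, ∑ e : G.E, g i j e)
      = ∑ i : G.V, ∑ j : G.V, ∑ e : G.E, (f i j e - g i j e) := by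
  simp [Finset.sum_sub_distrib]

lemma triple_add (f g : G.V → G.V → G.E → ℝ) :
    ((∑ i : G.V, ∑ j : G.V, ∑ e : G.E, f i j e) + ∑ i : G.V, ∑ j : G.V, ∑ e : G.E, g i j e)
      = ∑ i : G.V, ∑ j : G.V, ∑ e : G.E, (f i j e + g i j e) := by
  simp [Finset.sum_add_distrib]

lemma triple_mul (r : ℝ) (f : G.V → G.V → G.E → ℝ) :
    (r * ∑ i : G.V, ∑ j : G.V, ∑ e : G.E, f i j e)
      = ∑ i : G.V, ∑ j : G.V, ∑ e : G.E, r * f i j e := by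
  simp [Finset.mul_sum]

lemma dot_glap (c : G.E → ℝ) (u v : G.V → ℝ) :
    ∑ x : G.V, u x * glap G c v x = qf G c u v / 2 := by
  have h1 : ∑ x : G.V, u x * glap G c v x
      = ∑ i : G.V, ∑ j : G.V, ∑ e : G.E,
          if G.ends e = s(i, j) then c e * (u i * (v i - v j)) else 0 := by
    refine Finset.sum_congr rfl fun i _ => ?_
    rw [glap, Finset.mul_sum]
    refine Finset.sum_congr rfl fun j _ => ?_
    rw [Finset.mul_sum]
    refine Finset.sum_congr rfl fun e _ => ?_
    split_ifs <;> ring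
  have h2 := swap_key G c (fun i j => u i * (v i - v j))
  have h3 : qf G c u v
      = (∑ i : G.V, ∑ j : G.V, ∑ e : G.E,
          if G.ends e = s(i, j) then c e * (u i * (v i - v j)) else 0)
        + ∑ i : G.V, ∑ j : G.V, ∑ e : G.E,
            if G.ends e = s(i, j) then c e * (u j * (v j - v i)) else 0 := by
    rw [triple_add]
    refine Finset.sum_congr rfl fun i _ => Finset.sum_congr rfl fun j _ =>
      Finset.sum_congr rfl fun e _ => ?_
    split_ifs <;> ring
  have h4 : (∑ i : G.V, ∑ j : G.V, ∑ e : G.E,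
      if G.ends e = s(i, j) then c e * (u j * (v j - v i)) else 0)
      = ∑ i : G.V, ∑ j : G.V, ∑ e : G.E,
          if G.ends e = s(i, j) then c e * (u i * (v i - v j)) else 0 :=
    swap_key G c (fun i j => u j * (v j - v i))
  rw [h1, h3, h4]
  ring

lemma qf_comm (c : G.E → ℝ) (u v : G.V → ℝ) : qf G c u v = qf G c v u := by
  refine Finset.sum_congr rfl fun i _ => Finset.sum_congr rfl fun j _ =>
    Finset.sum_congr rfl fun e _ => ?_
  split_ifs <;> ring

lemma qf_congr (c c' : G.E → ℝ) (h : ∀ e, c e = c' e) (u v : G.V → ℝ) :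
    qf G c u v = qf G c' u v := by
  refine Finset.sum_congr rfl fun i _ => Finset.sum_congr rfl fun j _ =>
    Finset.sum_congr rfl fun e _ => ?_
  rw [h e]

lemma qf_nonneg (c : G.E → ℝ) (hc : ∀ e, 0 ≤ c e) (u : G.V → ℝ) : 0 ≤ qf G c u u := by
  refine Finset.sum_nonneg fun i _ => Finset.sum_nonneg fun j _ =>
    Finset.sum_nonneg fun e _ => ?_
  split_ifs
  · nlinarith [hc e, sq_nonneg (u i - u j)]
  · exact le_refl 0

lemma qf_sum (n : ℕ) (c : Fin n → G.E → ℝ) (u v : G.V → ℝ) :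
    ∑ k : Fin n, qf G (c k) u v = qf G (fun e => ∑ k : Fin n, c k e) u v := by
  unfold qf
  rw [Finset.sum_comm]
  refine Finset.sum_congr rfl fun i _ => ?_
  rw [Finset.sum_comm]
  refine Finset.sum_congr rfl fun j _ => ?_
  rw [Finset.sum_comm]
  refine Finset.sum_congr rfl fun e _ => ?_
  split_ifs with h
  · rw [Finset.sum_mul, Finset.sum_mul]
  · simp

lemma thomson (μ c : G.E → ℝ) (hμ : ∀ e, 0 < μ e) (p φ X : G.V → ℝ)
    (hp : glap G (fun e => (μ e)⁻¹) p = X) (hφ : glap G c φ = X) :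
    ∑ x : G.V, X x * p x ≤ qf G (fun e => μ e * c e ^ 2) φ φ / 2 := by
  have h0 : (0:ℝ) ≤ ∑ i : G.V, ∑ j : G.V, ∑ e : G.E,
      (if G.ends e = s(i, j) then
        μ e * (c e * (φ i - φ j) - (μ e)⁻¹ * (p i - p j)) ^ 2 else 0) := by
    refine Finset.sum_nonneg fun i _ => Finset.sum_nonneg fun j _ =>
      Finset.sum_nonneg fun e _ => ?_
    split_ifs
    · exact mul_nonneg (hμ e).le (sq_nonneg _)
    · exact le_refl 0
  have hexp : (∑ i : G.V, ∑ j : G.V, ∑ e : G.E,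
      (if G.ends e = s(i, j) then
        μ e * (c e * (φ i - φ j) - (μ e)⁻¹ * (p i - p j)) ^ 2 else 0))
      = qf G (fun e => μ e * c e ^ 2) φ φ - 2 * qf G c φ p
        + qf G (fun e => (μ e)⁻¹) p p := by
    unfold qf
    rw [triple_mul, triple_sub, triple_add]
    refine Finset.sum_congr rfl fun i _ => Finset.sum_congr rfl fun j _ =>
      Finset.sum_congr rfl fun e _ => ?_
    split_ifs with h
    · have hne : μ e ≠ 0 := ne_of_gt (hμ e)
      field_simp
      ring
    · ring
  have hcomm : ∑ x : G.V, p x * X x = ∑ x : G.V, X x * p x :=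
    Finset.sum_congr rfl fun x _ => mul_comm _ _
  have hqp : qf G c φ p = 2 * ∑ x : G.V, X x * p x := by
    have h1 : ∑ x : G.V, p x * glap G c φ x = qf G c p φ / 2 := dot_glap G c p φ
    rw [hφ] at h1
    rw [qf_comm G c φ p]
    linarith
  have hpp : qf G (fun e => (μ e)⁻¹) p p = 2 * ∑ x : G.V, X x * p x := by
    have h1 : ∑ x : G.V, p x * glap G (fun e => (μ e)⁻¹) p x
        = qf G (fun e => (μ e)⁻¹) p p / 2 := dot_glap G _ p p
    rw [hp] at h1
    linarith
  rw [hexp, hqp, hpp] at h0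
  linarith

lemma cut (c : G.E → ℝ) (hc : ∀ e, 0 < c e) (q X : G.V → ℝ)
    (hq : glap G c q = X) {e : G.E} {a b : G.V} (hab : G.ends e = s(a, b)) :
    c e * (q a - q b) ≤ ∑ x : G.V, max 0 (X x) := by
  have hR : (0:ℝ) ≤ ∑ x : G.V, max 0 (X x) :=
    Finset.sum_nonneg fun x _ => le_max_left _ _
  rcases le_or_gt (q a) (q b) with hle | hlt
  · have : c e * (q a - q b) ≤ 0 :=
      mul_nonpos_of_nonneg_of_nonpos (hc e).le (by linarith)
    linarith
  -- g x j := current from x to j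
  set g : G.V → G.V → ℝ := fun x j =>
    ∑ e' : G.E, if G.ends e' = s(x, j) then c e' * (q x - q j) else 0 with hg
  have hganti : ∀ x j : G.V, g j x = - g x j := by
    intro x j
    rw [hg]
    simp only
    rw [← Finset.sum_neg_distrib]
    refine Finset.sum_congr rfl fun e' _ => ?_
    rw [Sym2.eq_swap]
    split_ifs <;> ring
  have hgnn : ∀ x j : G.V, q a ≤ q x → q j < q a → 0 ≤ g x j := by
    intro x j hx hj
    refine Finset.sum_nonneg fun e' _ => ?_
    split_ifs
    · have : 0 ≤ q x - q j := by linarith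
      exact mul_nonneg (hc e').le this
    · exact le_refl 0
  set S : Finset G.V := Finset.univ.filter (fun x => q a ≤ q x) with hS
  set T : Finset G.V := Finset.univ.filter (fun x => ¬ q a ≤ q x) with hT
  have hXg : ∀ x : G.V, X x = ∑ j : G.V, g x j := by
    intro x
    rw [← hq]
    rfl
  have hsplit : ∑ x ∈ S, X x = (∑ x ∈ S, ∑ j ∈ S, g x j) + ∑ x ∈ S, ∑ j ∈ T, g x j := by
    rw [← Finset.sum_add_distrib]
    refine Finset.sum_congr rfl fun x _ => ?_
    rw [hXg x, hS, hT]
    exact (Finset.sum_filter_add_sum_filter_not Finset.univ _ _).symm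
  have hSS : (∑ x ∈ S, ∑ j ∈ S, g x j) = 0 := by
    have h1 : (∑ x ∈ S, ∑ j ∈ S, g x j) = ∑ x ∈ S, ∑ j ∈ S, g j x := Finset.sum_comm
    have h2 : (∑ x ∈ S, ∑ j ∈ S, g j x) = - ∑ x ∈ S, ∑ j ∈ S, g x j := by
      rw [← Finset.sum_neg_distrib]
      refine Finset.sum_congr rfl fun x _ => ?_
      rw [← Finset.sum_neg_distrib]
      exact Finset.sum_congr rfl fun j _ => hganti x j
    linarith
  have haS : a ∈ S := by rw [hS]; simp
  have hbT : b ∈ T := by rw [hT]; simp; linarith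
  -- single term bound
  have hterm : c e * (q a - q b) ≤ g a b := by
    have hnn : ∀ e' : G.E, 0 ≤ if G.ends e' = s(a, b) then c e' * (q a - q b) else 0 := by
      intro e'
      split_ifs
      · exact mul_nonneg (hc e').le (by linarith)
      · exact le_refl 0
    have h := Finset.single_le_sum (f := fun e' : G.E =>
        if G.ends e' = s(a, b) then c e' * (q a - q b) else 0)
      (fun e' _ => hnn e') (Finset.mem_univ e)
    simp only [if_pos hab] at h
    exact h
  have hrow : g a b ≤ ∑ j ∈ T, g a j := by
    refine Finset.single_le_sum (fun j hj => ?_) hbT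
    rw [hT] at hj
    simp at hj
    exact hgnn a j (le_refl _) (by linarith)
  have hall : (∑ j ∈ T, g a j) ≤ ∑ x ∈ S, ∑ j ∈ T, g x j := by
    refine Finset.single_le_sum (f := fun x => ∑ j ∈ T, g x j) (fun x hx => ?_) haS
    rw [hS] at hx
    simp at hx
    refine Finset.sum_nonneg fun j hj => ?_
    rw [hT] at hj
    simp at hj
    exact hgnn x j hx (by linarith)
  have hfin : (∑ x ∈ S, X x) ≤ ∑ x : G.V, max 0 (X x) := by
    calc ∑ x ∈ S, X x ≤ ∑ x ∈ S, max 0 (X x) :=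
          Finset.sum_le_sum fun x _ => le_max_right _ _
    _ ≤ ∑ x : G.V, max 0 (X x) :=
          Finset.sum_le_sum_of_subset_of_nonneg (Finset.subset_univ S)
            (fun x _ _ => le_max_left _ _)
  have := hsplit
  linarith

lemma glap_lin (c : G.E → ℝ) (p q : G.V → ℝ) (t : ℝ) (X Y : G.V → ℝ)
    (hp : glap G c p = X) (hq : glap G c q = Y) :
    glap G c (fun x => p x + t * q x) = fun x => X x + t * Y x := by
  funext i
  rw [← hp, ← hq]
  show (∑ j : G.V, ∑ e : G.E, if G.ends e = s(i, j)
      then c e * ((p i + t * q i) - (p j + t * q j)) else 0) = _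
  simp only [glap]
  rw [Finset.mul_sum, ← Finset.sum_add_distrib]
  refine Finset.sum_congr rfl fun j _ => ?_
  rw [Finset.mul_sum, ← Finset.sum_add_distrib]
  refine Finset.sum_congr rfl fun e _ => ?_
  split_ifs <;> ring

noncomputable def glapL (c : G.E → ℝ) : (G.V → ℝ) →ₗ[ℝ] (G.V → ℝ) where
  toFun := glap G c
  map_add' u v := by
    funext i
    simp only [glap, Pi.add_apply]
    rw [← Finset.sum_add_distrib]
    refine Finset.sum_congr rfl fun j _ => ?_
    rw [← Finset.sum_add_distrib]
    refine Finset.sum_congr rfl fun e _ => ?_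
    split_ifs <;> ring
  map_smul' r v := by
    funext i
    simp only [glap, Pi.smul_apply, smul_eq_mul, RingHom.id_apply]
    rw [Finset.mul_sum]
    refine Finset.sum_congr rfl fun j _ => ?_
    rw [Finset.mul_sum]
    refine Finset.sum_congr rfl fun e _ => ?_
    split_ifs <;> ring

noncomputable def sumL : (G.V → ℝ) →ₗ[ℝ] ℝ where
  toFun v := ∑ x : G.V, v x
  map_add' u v := by simp [Finset.sum_add_distrib]
  map_smul' r v := by simp [Finset.mul_sum]

lemma sum_glap (c : G.E → ℝ) (v : G.V → ℝ) : ∑ x : G.V, glap G c v x = 0 := by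
  have h := dot_glap G c (fun _ => 1) v
  simp only [one_mul] at h
  have hq : qf G c (fun _ => 1) v = 0 := by
    refine Finset.sum_eq_zero fun i _ => Finset.sum_eq_zero fun j _ =>
      Finset.sum_eq_zero fun e _ => ?_
    split_ifs <;> ring
  rw [hq] at h
  simpa using h

lemma ker_const (hG : G.Connected) (c : G.E → ℝ) (hc : ∀ e, 0 < c e)
    (d : G.V → ℝ) (hd : glap G c d = 0) : ∀ i j : G.V, d i = d j := by
  -- qf c d d = 0
  have h1 : qf G c d d = 0 := by
    have h := dot_glap G c d d
    rw [hd] at h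
    simp at h
    linarith
  -- each term vanishes
  have hterm : ∀ (i j : G.V) (e : G.E), G.ends e = s(i, j) → d i = d j := by
    intro i j e he
    by_contra hne
    have hpos : ∀ (i' j' : G.V) (e' : G.E),
        0 ≤ if G.ends e' = s(i', j') then c e' * (d i' - d j') * (d i' - d j') else 0 := by
      intro i' j' e'
      split_ifs
      · nlinarith [(hc e').le, sq_nonneg (d i' - d j')]
      · exact le_refl 0
    have hstrict : (0:ℝ) < if G.ends e = s(i, j) then c e * (d i - d j) * (d i - d j) else 0 := by
      rw [if_pos he]
      have : d i - d j ≠ 0 := sub_ne_zero_of_ne hne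
      nlinarith [hc e, mul_pos_of_neg_of_neg (a := d i - d j) (b := d i - d j), sq_nonneg (d i - d j), sq_abs (d i - d j), abs_pos.mpr this, mul_self_pos.mpr this]
    have hlt : (0:ℝ) < qf G c d d := by
      have hinner : ∀ i' : G.V, 0 ≤ ∑ j' : G.V, ∑ e' : G.E,
          if G.ends e' = s(i', j') then c e' * (d i' - d j') * (d i' - d j') else 0 :=
        fun i' => Finset.sum_nonneg fun j' _ => Finset.sum_nonneg fun e' _ => hpos i' j' e'
      have hi : (0:ℝ) < ∑ j' : G.V, ∑ e' : G.E,
          if G.ends e' = s(i, j') then c e' * (d i - d j') * (d i - d j') else 0 := by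
        have hj : (0:ℝ) < ∑ e' : G.E,
            if G.ends e' = s(i, j) then c e' * (d i - d j) * (d i - d j) else 0 := by
          have := Finset.single_le_sum (f := fun e' : G.E =>
              if G.ends e' = s(i, j) then c e' * (d i - d j) * (d i - d j) else 0)
            (fun e' _ => hpos i j e') (Finset.mem_univ e)
          calc (0:ℝ) < _ := hstrict
          _ ≤ _ := this
        have := Finset.single_le_sum (f := fun j' : G.V => ∑ e' : G.E,
            if G.ends e' = s(i, j') then c e' * (d i - d j') * (d i - d j') else 0)
          (fun j' _ => Finset.sum_nonneg fun e' _ => hpos i j' e') (Finset.mem_univ j)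
        linarith
      have := Finset.single_le_sum (f := fun i' : G.V => ∑ j' : G.V, ∑ e' : G.E,
          if G.ends e' = s(i', j') then c e' * (d i' - d j') * (d i' - d j') else 0)
        (fun i' _ => hinner i') (Finset.mem_univ i)
      calc (0:ℝ) < _ := hi
      _ ≤ qf G c d d := this
    rw [h1] at hlt
    exact lt_irrefl 0 hlt
  -- propagate along connectivity
  intro i j
  have hreach := hG i j
  induction hreach with
  | rel x y hxy =>
      obtain ⟨e, _, he⟩ := hxy
      exact hterm x y e he
  | refl x => rfl
  | symm x y _ ih => exact ih.symm
  | trans x y z _ _ ih1 ih2 => exact ih1.trans ih2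

lemma exists_sol (hG : G.Connected) (c : G.E → ℝ) (hc : ∀ e, 0 < c e)
    (X : G.V → ℝ) (hX : ∑ x : G.V, X x = 0) : ∃ p : G.V → ℝ, glap G c p = X := by
  rcases isEmpty_or_nonempty G.V with h | h
  · exact ⟨0, funext fun x => (h.false x).elim⟩
  · obtain ⟨x₀⟩ := h
    have hker : LinearMap.ker (glapL G c) = Submodule.span ℝ {(fun _ => 1 : G.V → ℝ)} := by
      apply le_antisymm
      · intro d hd
        have hd' : glap G c d = 0 := hd
        have hconst := ker_const G hG c hc d hd'
        rw [Submodule.mem_span_singleton]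
        exact ⟨d x₀, funext fun x => by simp [hconst x x₀]⟩
      · rw [Submodule.span_le, Set.singleton_subset_iff]
        show glap G c (fun _ => 1) = 0
        funext i
        refine Finset.sum_eq_zero fun j _ => Finset.sum_eq_zero fun e _ => ?_
        split_ifs <;> ring
    have hone : (fun _ => (1:ℝ) : G.V → ℝ) ≠ 0 := by
      intro h0
      have := congrFun h0 x₀
      norm_num at this
    have hkrank : Module.finrank ℝ (LinearMap.ker (glapL G c)) = 1 := by
      rw [hker]; exact finrank_span_singleton hone
    have hsurj : Function.Surjective (sumL G) := by
      intro r
      refine ⟨fun _ => r / Fintype.card G.V, ?_⟩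
      show ∑ _x : G.V, r / Fintype.card G.V = r
      rw [Finset.sum_const, Finset.card_univ, nsmul_eq_mul]
      have hcard : (Fintype.card G.V : ℝ) ≠ 0 := by
        have : Nonempty G.V := ⟨x₀⟩
        exact Nat.cast_ne_zero.mpr Fintype.card_ne_zero
      field_simp
    have hZrank : Module.finrank ℝ (LinearMap.ker (sumL G)) + 1 = Fintype.card G.V := by
      have h1 := LinearMap.finrank_range_add_finrank_ker (sumL G)
      rw [Module.finrank_pi] at h1
      have h2 : LinearMap.range (sumL G) = ⊤ := LinearMap.range_eq_top.mpr hsurj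
      rw [h2] at h1
      simp at h1
      omega
    have hrange : LinearMap.range (glapL G c) = LinearMap.ker (sumL G) := by
      apply Submodule.eq_of_le_of_finrank_le
      · rintro y ⟨u, rfl⟩
        exact sum_glap G c u
      · have h1 := LinearMap.finrank_range_add_finrank_ker (glapL G c)
        rw [Module.finrank_pi, hkrank] at h1
        omega
    have hXmem : X ∈ LinearMap.ker (sumL G) := hX
    rw [← hrange] at hXmem
    obtain ⟨p, hp⟩ := hXmem
    exact ⟨p, hp⟩

lemma dot_sym (c : G.E → ℝ) {p p' X X' : G.V → ℝ}
    (hp : glap G c p = X) (hp' : glap G c p' = X') :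
    ∑ x : G.V, X x * p' x = ∑ x : G.V, X' x * p x := by
  have h1 : ∑ x : G.V, p' x * glap G c p x = qf G c p' p / 2 := dot_glap G c p' p
  have h2 : ∑ x : G.V, p x * glap G c p' x = qf G c p p' / 2 := dot_glap G c p p'
  rw [hp] at h1
  rw [hp'] at h2
  have h3 : qf G c p' p = qf G c p p' := qf_comm G c p' p
  have c1 : ∑ x : G.V, X x * p' x = ∑ x : G.V, p' x * X x :=
    Finset.sum_congr rfl fun x _ => mul_comm _ _
  have c2 : ∑ x : G.V, X' x * p x = ∑ x : G.V, p x * X' x :=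
    Finset.sum_congr rfl fun x _ => mul_comm _ _
  rw [c1, c2, h1, h2, h3]

lemma pair_count (e : G.E) (r : ℝ) (hr : 0 ≤ r) :
    (∑ a : G.V, ∑ b : G.V, if G.ends e = s(a, b) then r else 0) ≤ 2 * r := by
  obtain ⟨u, v, huv⟩ : ∃ u v : G.V, G.ends e = s(u, v) := by
    obtain ⟨o, ho⟩ := G.exists_oedge e
    exact ⟨o.1.2.1, o.1.2.2, by rw [← ho]; exact o.2⟩
  have hle : ∀ a b : G.V, (if G.ends e = s(a, b) then r else 0)
      ≤ (if a = u ∧ b = v then r else 0) + (if a = v ∧ b = u then r else 0) := by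
    intro a b
    by_cases h : G.ends e = s(a, b)
    · rw [if_pos h]
      rw [huv] at h
      rcases Sym2.eq_iff.mp h.symm with ⟨h1, h2⟩ | ⟨h1, h2⟩
      · have e1 : (if a = u ∧ b = v then r else 0) = r := if_pos ⟨h1, h2⟩
        have e2 : (0:ℝ) ≤ if a = v ∧ b = u then r else 0 := by split_ifs <;> simp [hr]
        linarith
      · have e1 : (if a = v ∧ b = u then r else 0) = r := if_pos ⟨h1, h2⟩
        have e2 : (0:ℝ) ≤ if a = u ∧ b = v then r else 0 := by split_ifs <;> simp [hr]
        linarith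
    · rw [if_neg h]
      have h1 : (0:ℝ) ≤ if a = u ∧ b = v then r else 0 := by split_ifs <;> simp [hr]
      have h2 : (0:ℝ) ≤ if a = v ∧ b = u then r else 0 := by split_ifs <;> simp [hr]
      linarith
  calc (∑ a : G.V, ∑ b : G.V, if G.ends e = s(a, b) then r else 0)
      ≤ ∑ a : G.V, ∑ b : G.V,
          ((if a = u ∧ b = v then r else 0) + (if a = v ∧ b = u then r else 0)) :=
        Finset.sum_le_sum fun a _ => Finset.sum_le_sum fun b _ => hle a b
    _ = (∑ a : G.V, ∑ b : G.V, if a = u ∧ b = v then r else 0)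
          + (∑ a : G.V, ∑ b : G.V, if a = v ∧ b = u then r else 0) := by
        rw [← Finset.sum_add_distrib]
        exact Finset.sum_congr rfl fun a _ => Finset.sum_add_distrib
    _ = 2 * r := by
        simp [ite_and, Finset.sum_ite_eq', Finset.sum_ite_eq]
        ring

lemma dot_self_nonneg (c : G.E → ℝ) (hc : ∀ e, 0 < c e) (q X : G.V → ℝ)
    (hq : glap G c q = X) : 0 ≤ ∑ x : G.V, X x * q x := by
  have h1 : ∑ x : G.V, q x * glap G c q x = qf G c q q / 2 := dot_glap G c q q
  rw [hq] at h1
  have h2 : (0:ℝ) ≤ qf G c q q := qf_nonneg G c (fun e => (hc e).le) q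
  have hc' : ∑ x : G.V, X x * q x = ∑ x : G.V, q x * X x :=
    Finset.sum_congr rfl fun x _ => mul_comm _ _
  linarith

lemma quad_nonneg (n : ℕ) (hn : 0 < n) (μ : Fin n → G.E → ℝ) (hμ : ∀ k e, 0 < μ k e)
    (X p : G.V → ℝ) (q : Fin n → G.V → ℝ)
    (hp : glap G (fun e => (∑ k : Fin n, μ k e)⁻¹) p = X)
    (hq : ∀ k, glap G (fun e => (μ k e)⁻¹) (q k) = X) :
    ∑ k : Fin n, ∑ x : G.V, X x * q k x ≤ ∑ x : G.V, X x * p x := by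
  have hν : ∀ e, 0 < ∑ k : Fin n, μ k e :=
    fun e => Finset.sum_pos (fun k _ => hμ k e) ⟨⟨0, hn⟩, Finset.mem_univ _⟩
  have hk : ∀ k : Fin n, ∑ x : G.V, X x * q k x
      ≤ qf G (fun e => μ k e * ((∑ k' : Fin n, μ k' e)⁻¹) ^ 2) p p / 2 :=
    fun k => thomson G (μ k) (fun e => (∑ k' : Fin n, μ k' e)⁻¹) (hμ k) (q k) p X (hq k) hp
  have hsum := Finset.sum_le_sum (fun k (_ : k ∈ Finset.univ) => hk k)
  have h1 : ∑ k : Fin n, qf G (fun e => μ k e * ((∑ k' : Fin n, μ k' e)⁻¹) ^ 2) p p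
      = qf G (fun e => (∑ k' : Fin n, μ k' e)⁻¹) p p := by
    rw [qf_sum]
    refine qf_congr G _ _ (fun e => ?_) p p
    have hne : (∑ k' : Fin n, μ k' e) ≠ 0 := ne_of_gt (hν e)
    rw [← Finset.sum_mul, sq, ← mul_assoc, mul_inv_cancel₀ hne, one_mul]
  have h2 : qf G (fun e => (∑ k' : Fin n, μ k' e)⁻¹) p p = 2 * ∑ x : G.V, X x * p x := by
    have h := dot_glap G (fun e => (∑ k' : Fin n, μ k' e)⁻¹) p p
    rw [hp] at h
    have hc : ∑ x : G.V, p x * X x = ∑ x : G.V, X x * p x :=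
      Finset.sum_congr rfl fun x _ => mul_comm _ _
    linarith
  rw [← Finset.sum_div, h1, h2] at hsum
  linarith

lemma quad_upper (n : ℕ) (hn : 0 < n) (μ : Fin n → G.E → ℝ) (hμ : ∀ k e, 0 < μ k e)
    (X p : G.V → ℝ) (q : Fin n → G.V → ℝ)
    (hp : glap G (fun e => (∑ k : Fin n, μ k e)⁻¹) p = X)
    (hq : ∀ k, glap G (fun e => (μ k e)⁻¹) (q k) = X) (i : Fin n) :
    (∑ x : G.V, X x * p x) - (∑ k : Fin n, ∑ x : G.V, X x * q k x)
      ≤ (∑ x : G.V, max 0 (X x)) ^ 2 * ∑ l ∈ Finset.univ.erase i, ∑ e : G.E, μ l e := by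
  set N : ℝ := ∑ x : G.V, max 0 (X x) with hN
  have hNnn : 0 ≤ N := Finset.sum_nonneg fun x _ => le_max_left _ _
  have hν : ∀ e, 0 < ∑ k : Fin n, μ k e :=
    fun e => Finset.sum_pos (fun k _ => hμ k e) ⟨⟨0, hn⟩, Finset.mem_univ _⟩
  -- Thomson with comparison current from network i
  have h1 : ∑ x : G.V, X x * p x
      ≤ qf G (fun e => (∑ k : Fin n, μ k e) * ((μ i e)⁻¹) ^ 2) (q i) (q i) / 2 :=
    thomson G (fun e => ∑ k : Fin n, μ k e) (fun e => (μ i e)⁻¹) hν p (q i) X hp (hq i)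
  have h2 : qf G (fun e => (∑ k : Fin n, μ k e) * ((μ i e)⁻¹) ^ 2) (q i) (q i)
      = ∑ k : Fin n, qf G (fun e => μ k e * ((μ i e)⁻¹) ^ 2) (q i) (q i) := by
    rw [qf_sum]
    refine qf_congr G _ _ (fun e => ?_) (q i) (q i)
    rw [← Finset.sum_mul]
  have h3 : qf G (fun e => μ i e * ((μ i e)⁻¹) ^ 2) (q i) (q i)
      = 2 * ∑ x : G.V, X x * q i x := by
    have he : qf G (fun e => μ i e * ((μ i e)⁻¹) ^ 2) (q i) (q i)
        = qf G (fun e => (μ i e)⁻¹) (q i) (q i) := by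
      refine qf_congr G _ _ (fun e => ?_) (q i) (q i)
      rw [sq, ← mul_assoc, mul_inv_cancel₀ (ne_of_gt (hμ i e)), one_mul]
    have h := dot_glap G (fun e => (μ i e)⁻¹) (q i) (q i)
    rw [hq i] at h
    have hc : ∑ x : G.V, q i x * X x = ∑ x : G.V, X x * q i x :=
      Finset.sum_congr rfl fun x _ => mul_comm _ _
    rw [he]
    linarith
  -- per-edge bound for the cross networks
  have h4 : ∀ l : Fin n, qf G (fun e => μ l e * ((μ i e)⁻¹) ^ 2) (q i) (q i)
      ≤ 2 * (N ^ 2 * ∑ e : G.E, μ l e) := by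
    intro l
    have hcut2 : ∀ (a b : G.V) (e : G.E), G.ends e = s(a, b) →
        ((μ i e)⁻¹ * (q i a - q i b)) ^ 2 ≤ N ^ 2 := by
      intro a b e hab
      have c1 := cut G (fun e => (μ i e)⁻¹) (fun e => inv_pos.mpr (hμ i e)) (q i) X (hq i) hab
      have c2 := cut G (fun e => (μ i e)⁻¹) (fun e => inv_pos.mpr (hμ i e)) (q i) X (hq i)
        (hab.trans Sym2.eq_swap)
      nlinarith
    have hterm : ∀ (a b : G.V) (e : G.E),
        (if G.ends e = s(a, b) then μ l e * ((μ i e)⁻¹) ^ 2 * (q i a - q i b) * (q i a - q i b) else 0)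
        ≤ (if G.ends e = s(a, b) then μ l e * N ^ 2 else 0) := by
      intro a b e
      split_ifs with h
      · have := hcut2 a b e h
        have hb : μ l e * (((μ i e)⁻¹ * (q i a - q i b)) ^ 2) ≤ μ l e * N ^ 2 :=
          mul_le_mul_of_nonneg_left this (hμ l e).le
        nlinarith [hb]
      · exact le_refl 0
    have reorder : ∀ f : G.V → G.V → G.E → ℝ,
        (∑ a : G.V, ∑ b : G.V, ∑ e : G.E, f a b e) = ∑ e : G.E, ∑ a : G.V, ∑ b : G.V, f a b e := by
      intro f
      calc (∑ a : G.V, ∑ b : G.V, ∑ e : G.E, f a b e)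
          = ∑ a : G.V, ∑ e : G.E, ∑ b : G.V, f a b e :=
            Finset.sum_congr rfl fun a _ => Finset.sum_comm
        _ = ∑ e : G.E, ∑ a : G.V, ∑ b : G.V, f a b e := Finset.sum_comm
    calc qf G (fun e => μ l e * ((μ i e)⁻¹) ^ 2) (q i) (q i)
        ≤ ∑ a : G.V, ∑ b : G.V, ∑ e : G.E,
            (if G.ends e = s(a, b) then μ l e * N ^ 2 else 0) := by
          refine Finset.sum_le_sum fun a _ => Finset.sum_le_sum fun b _ =>
            Finset.sum_le_sum fun e _ => hterm a b e
      _ = ∑ e : G.E, ∑ a : G.V, ∑ b : G.V,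
            (if G.ends e = s(a, b) then μ l e * N ^ 2 else 0) :=
          reorder _
      _ ≤ ∑ e : G.E, 2 * (μ l e * N ^ 2) :=
          Finset.sum_le_sum fun e _ => pair_count G e _ (mul_nonneg (hμ l e).le (sq_nonneg N))
      _ = 2 * (N ^ 2 * ∑ e : G.E, μ l e) := by
          simp only [Finset.mul_sum]
          exact Finset.sum_congr rfl fun e _ => by ring
  -- nonnegativity of each cross energy
  have h5 : ∀ l : Fin n, 0 ≤ ∑ x : G.V, X x * q l x :=
    fun l => dot_self_nonneg G (fun e => (μ l e)⁻¹) (fun e => inv_pos.mpr (hμ l e)) (q l) X (hq l)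
  -- split index i off
  have hsplit : ∑ k : Fin n, qf G (fun e => μ k e * ((μ i e)⁻¹) ^ 2) (q i) (q i)
      = (∑ l ∈ Finset.univ.erase i, qf G (fun e => μ l e * ((μ i e)⁻¹) ^ 2) (q i) (q i))
        + qf G (fun e => μ i e * ((μ i e)⁻¹) ^ 2) (q i) (q i) :=
    (Finset.sum_erase_add _ _ (Finset.mem_univ i)).symm
  have hsplit2 : ∑ k : Fin n, ∑ x : G.V, X x * q k x
      = (∑ l ∈ Finset.univ.erase i, ∑ x : G.V, X x * q l x) + ∑ x : G.V, X x * q i x :=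
    (Finset.sum_erase_add _ _ (Finset.mem_univ i)).symm
  have h6 : (∑ l ∈ Finset.univ.erase i, qf G (fun e => μ l e * ((μ i e)⁻¹) ^ 2) (q i) (q i))
      ≤ ∑ l ∈ Finset.univ.erase i, 2 * (N ^ 2 * ∑ e : G.E, μ l e) :=
    Finset.sum_le_sum fun l _ => h4 l
  have h7 : (0:ℝ) ≤ ∑ l ∈ Finset.univ.erase i, ∑ x : G.V, X x * q l x :=
    Finset.sum_nonneg fun l _ => h5 l
  have h8 : (∑ l ∈ Finset.univ.erase i, 2 * (N ^ 2 * ∑ e : G.E, μ l e))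
      = 2 * (N ^ 2 * ∑ l ∈ Finset.univ.erase i, ∑ e : G.E, μ l e) := by
    simp only [Finset.mul_sum]
  rw [h2, hsplit, h3] at h1
  rw [hsplit2]
  rw [h8] at h6
  linarith

end Stmt16

theorem stmt16 (G : RGraph) (hG : G.Connected) (D E : G.V → ℝ)
    (hD : ∑ x : G.V, D x = 0) (hE : ∑ x : G.V, E x = 0)
    (n : ℕ) (hn : 0 < n) (μ : Fin n → G.E → ℝ) (hμ : ∀ (k : Fin n) (e : G.E), 0 < μ k e)
    (v : G.V → ℝ) (hv : G.lap (fun e => ∑ k : Fin n, μ k e) v = E)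
    (w : Fin n → G.V → ℝ) (hw : ∀ k : Fin n, G.lap (μ k) (w k) = E) :
    |(∑ x : G.V, D x * v x) - (∑ k : Fin n, ∑ x : G.V, D x * w k x)| ≤
      (∑ x : G.V, max 0 (D x)) * (∑ x : G.V, max 0 (E x)) *
        Finset.univ.inf' ⟨⟨0, hn⟩, Finset.mem_univ _⟩
          (fun k : Fin n => ∑ l ∈ Finset.univ.erase k, ∑ e : G.E, μ l e) := by
  classical
  have hνpos : ∀ e, 0 < ∑ k : Fin n, μ k e :=
    fun e => Finset.sum_pos (fun k _ => hμ k e) ⟨⟨0, hn⟩, Finset.mem_univ _⟩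
  have hv' : Stmt16.glap G (fun e => (∑ k : Fin n, μ k e)⁻¹) v = E := by
    rw [← Stmt16.lap_eq_glap]; exact hv
  have hw' : ∀ k, Stmt16.glap G (fun e => (μ k e)⁻¹) (w k) = E := fun k => by
    rw [← Stmt16.lap_eq_glap]; exact hw k
  obtain ⟨a, ha⟩ := Stmt16.exists_sol G hG (fun e => (∑ k : Fin n, μ k e)⁻¹)
    (fun e => inv_pos.mpr (hνpos e)) D hD
  have hbex : ∀ k : Fin n, ∃ b, Stmt16.glap G (fun e => (μ k e)⁻¹) b = D :=
    fun k => Stmt16.exists_sol G hG _ (fun e => inv_pos.mpr (hμ k e)) D hD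
  choose b hb using hbex
  set ND : ℝ := ∑ x : G.V, max 0 (D x) with hND
  set NE : ℝ := ∑ x : G.V, max 0 (E x) with hNE
  set M : ℝ := Finset.univ.inf' ⟨⟨0, hn⟩, Finset.mem_univ _⟩
      (fun k : Fin n => ∑ l ∈ Finset.univ.erase k, ∑ e : G.E, μ l e) with hM
  set δ : ℝ := (∑ x : G.V, D x * v x) - ∑ k : Fin n, ∑ x : G.V, D x * w k x with hδ
  set sDD : ℝ := (∑ x : G.V, D x * a x) - ∑ k : Fin n, ∑ x : G.V, D x * b k x with hsDD
  set sEE : ℝ := (∑ x : G.V, E x * v x) - ∑ k : Fin n, ∑ x : G.V, E x * w k x with hsEE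
  have hsymν : ∑ x : G.V, E x * a x = ∑ x : G.V, D x * v x := Stmt16.dot_sym G _ hv' ha
  have hsymk : ∀ k, ∑ x : G.V, E x * b k x = ∑ x : G.V, D x * w k x :=
    fun k => Stmt16.dot_sym G _ (hw' k) (hb k)
  have hsymS : ∑ k : Fin n, ∑ x : G.V, E x * b k x = ∑ k : Fin n, ∑ x : G.V, D x * w k x :=
    Finset.sum_congr rfl fun k _ => hsymk k
  have key : ∀ t : ℝ, 0 ≤ sEE * (t * t) + (2 * δ) * t + sDD := by
    intro t
    set X : G.V → ℝ := fun x => D x + t * E x with hX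
    have hpX : Stmt16.glap G (fun e => (∑ k : Fin n, μ k e)⁻¹) (fun x => a x + t * v x) = X :=
      Stmt16.glap_lin G _ a v t D E ha hv'
    have hqX : ∀ k, Stmt16.glap G (fun e => (μ k e)⁻¹) (fun x => b k x + t * w k x) = X :=
      fun k => Stmt16.glap_lin G _ (b k) (w k) t D E (hb k) (hw' k)
    have h1 := Stmt16.quad_nonneg G n hn μ hμ X (fun x => a x + t * v x)
      (fun k x => b k x + t * w k x) hpX hqX
    have e1 : ∑ x : G.V, X x * (a x + t * v x)
        = (∑ x : G.V, D x * a x) + t * (∑ x : G.V, D x * v x)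
          + t * (∑ x : G.V, E x * a x) + (t * t) * (∑ x : G.V, E x * v x) := by
      rw [show (∑ x : G.V, X x * (a x + t * v x))
          = ∑ x : G.V, (D x * a x + t * (D x * v x) + t * (E x * a x)
            + (t * t) * (E x * v x)) from Finset.sum_congr rfl fun x _ => by rw [hX]; ring]
      simp only [Finset.sum_add_distrib, ← Finset.mul_sum]
    have e2k : ∀ k : Fin n, ∑ x : G.V, X x * (b k x + t * w k x)
        = (∑ x : G.V, D x * b k x) + t * (∑ x : G.V, D x * w k x)
          + t * (∑ x : G.V, E x * b k x) + (t * t) * (∑ x : G.V, E x * w k x) := by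
      intro k
      rw [show (∑ x : G.V, X x * (b k x + t * w k x))
          = ∑ x : G.V, (D x * b k x + t * (D x * w k x) + t * (E x * b k x)
            + (t * t) * (E x * w k x)) from Finset.sum_congr rfl fun x _ => by rw [hX]; ring]
      simp only [Finset.sum_add_distrib, ← Finset.mul_sum]
    have e2 : ∑ k : Fin n, ∑ x : G.V, X x * (b k x + t * w k x)
        = (∑ k : Fin n, ∑ x : G.V, D x * b k x)
          + t * (∑ k : Fin n, ∑ x : G.V, D x * w k x)
          + t * (∑ k : Fin n, ∑ x : G.V, E x * b k x)
          + (t * t) * (∑ k : Fin n, ∑ x : G.V, E x * w k x) := by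
      rw [Finset.sum_congr rfl fun k (_ : k ∈ Finset.univ) => e2k k]
      simp only [Finset.sum_add_distrib, ← Finset.mul_sum]
    rw [e1, e2, hsymν, hsymS] at h1
    rw [hsEE, hδ, hsDD]
    linarith
  have hCS : (2 * δ) ^ 2 - 4 * sEE * sDD ≤ 0 := by
    have h := discrim_le_zero key
    rw [discrim] at h
    linarith
  have hDDn : 0 ≤ sDD := by
    have := Stmt16.quad_nonneg G n hn μ hμ D a b ha hb
    rw [hsDD]; linarith
  have hEEn : 0 ≤ sEE := by
    have := Stmt16.quad_nonneg G n hn μ hμ E v w hv' hw'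
    rw [hsEE]; linarith
  obtain ⟨i₀, -, hi₀⟩ := Finset.exists_mem_eq_inf'
    (⟨⟨0, hn⟩, Finset.mem_univ _⟩ : (Finset.univ : Finset (Fin n)).Nonempty)
    (fun k : Fin n => ∑ l ∈ Finset.univ.erase k, ∑ e : G.E, μ l e)
  have hMi : M = ∑ l ∈ Finset.univ.erase i₀, ∑ e : G.E, μ l e := by
    rw [hM]; exact hi₀
  have hMnn : 0 ≤ M := by
    rw [hMi]
    exact Finset.sum_nonneg fun l _ => Finset.sum_nonneg fun e _ => (hμ l e).le
  have hDDu : sDD ≤ ND ^ 2 * M := by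
    have := Stmt16.quad_upper G n hn μ hμ D a b ha hb i₀
    rw [hsDD, hND, hMi]; linarith
  have hEEu : sEE ≤ NE ^ 2 * M := by
    have := Stmt16.quad_upper G n hn μ hμ E v w hv' hw' i₀
    rw [hsEE, hNE, hMi]; linarith
  have hD0 : 0 ≤ ND := by
    rw [hND]; exact Finset.sum_nonneg fun x _ => le_max_left _ _
  have hE0 : 0 ≤ NE := by
    rw [hNE]; exact Finset.sum_nonneg fun x _ => le_max_left _ _
  have h9a : δ ^ 2 ≤ sDD * sEE := by nlinarith [hCS]
  have h9b : sDD * sEE ≤ (ND ^ 2 * M) * (NE ^ 2 * M) :=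
    mul_le_mul hDDu hEEu hEEn (mul_nonneg (sq_nonneg _) hMnn)
  have hKnn : 0 ≤ ND * NE * M := mul_nonneg (mul_nonneg hD0 hE0) hMnn
  have h10 : |δ| ≤ ND * NE * M := by
    nlinarith [sq_abs δ, abs_nonneg δ, h9a, h9b, hKnn]
  exact h10
end
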